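/- arXiv:0811.1678 — 4 statements merged into one kernel-verified Lean document; each statement's English description precedes it below -/
import Mathlib

section
/- For every j ∈ ℤ the following hold: P_j² = 1; P_{j+2}·P_{j+1}·P_j = D; the set {P_j, P_{j+1}, P_{j+2}} generates G; and the homomorphism from the free product ℤ/2 * ℤ/2 * ℤ/2 sending its three free order-2 generators to P_j, P_{j+1}, P_{j+2} respectively is an isomorphism onto G. -/
/-- The relators of the presentation ⟨A, B, C | A² = B² = C² = 1⟩. -/
def rels : Set (FreeGroup (Fin 3)) :=
  {FreeGroup.of 0 * FreeGroup.of 0, FreeGroup.of 1 * FreeGroup.of 1,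
   FreeGroup.of 2 * FreeGroup.of 2}

/-- `G` is the group ⟨A, B, C | A² = B² = C² = 1⟩, the free product of three copies of ℤ/2. -/
abbrev G : Type := PresentedGroup rels

def A : G := PresentedGroup.of 0
def B : G := PresentedGroup.of 1
def C : G := PresentedGroup.of 2

/-- The distinguished element `D = C·B·A`. -/
def D : G := C * B * A
section Aux

lemma rel_mem (r : FreeGroup (Fin 3)) (hr : r ∈ rels) :
    PresentedGroup.mk rels r = 1 :=
  (QuotientGroup.eq_one_iff _).mpr (Subgroup.subset_normalClosure hr)

lemma sqA : A * A = 1 := by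
  exact rel_mem (FreeGroup.of 0 * FreeGroup.of 0) (by left; rfl)

lemma sqB : B * B = 1 := by
  exact rel_mem (FreeGroup.of 1 * FreeGroup.of 1) (by right; left; rfl)

lemma sqC : C * C = 1 := by
  exact rel_mem (FreeGroup.of 2 * FreeGroup.of 2) (by right; right; rfl)

lemma invA : A⁻¹ = A := inv_eq_of_mul_eq_one_right sqA
lemma invB : B⁻¹ = B := inv_eq_of_mul_eq_one_right sqB
lemma invC : C⁻¹ = C := inv_eq_of_mul_eq_one_right sqC

def mkHom (x y z : G) (hx : x * x = 1) (hy : y * y = 1) (hz : z * z = 1) : G →* G :=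
  PresentedGroup.toGroup (f := ![x, y, z]) (by
    intro r hr
    rcases hr with h | h | h <;> subst h <;>
      simp [map_mul, hx, hy, hz])

lemma mkHom_A (x y z : G) (hx : x * x = 1) (hy : y * y = 1) (hz : z * z = 1) :
    mkHom x y z hx hy hz A = x := by
  simpa [mkHom, A] using PresentedGroup.toGroup.of (f := ![x, y, z]) _ (x := (0 : Fin 3))

lemma mkHom_B (x y z : G) (hx : x * x = 1) (hy : y * y = 1) (hz : z * z = 1) :
    mkHom x y z hx hy hz B = y := by
  simpa [mkHom, B] using PresentedGroup.toGroup.of (f := ![x, y, z]) _ (x := (1 : Fin 3))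

lemma mkHom_C (x y z : G) (hx : x * x = 1) (hy : y * y = 1) (hz : z * z = 1) :
    mkHom x y z hx hy hz C = z := by
  simpa [mkHom, C] using PresentedGroup.toGroup.of (f := ![x, y, z]) _ (x := (2 : Fin 3))

lemma hom_eq_id (φ : G →* G) (h0 : φ A = A) (h1 : φ B = B) (h2 : φ C = C) :
    φ = MonoidHom.id G := by
  apply PresentedGroup.ext
  intro x
  fin_cases x
  · exact h0
  · exact h1
  · exact h2

lemma closure_ABC : Subgroup.closure ({A, B, C} : Set G) = ⊤ := by
  have hrange : Set.range (PresentedGroup.of : Fin 3 → G) = {A, B, C} := by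
    ext g
    simp only [Set.mem_range, Set.mem_insert_iff, Set.mem_singleton_iff, A, B, C]
    constructor
    · rintro ⟨i, rfl⟩
      fin_cases i
      · left; rfl
      · right; left; rfl
      · right; right; rfl
    · rintro (rfl | rfl | rfl)
      exacts [⟨0, rfl⟩, ⟨1, rfl⟩, ⟨2, rfl⟩]
  rw [← hrange]
  exact PresentedGroup.closure_range_of rels

lemma conj_sq (h g : G) (hg : g * g = 1) : (h * g * h⁻¹) * (h * g * h⁻¹) = 1 := by
  have e : (h * g * h⁻¹) * (h * g * h⁻¹) = h * (g * g) * h⁻¹ := by group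
  rw [e, hg, mul_one, mul_inv_cancel]

lemma conj_sq' (h g : G) (hg : g * g = 1) : (h * g * h⁻¹) ^ 2 = 1 := by
  rw [sq]; exact conj_sq h g hg

/-- the rotation automorphism A ↦ B ↦ C ↦ D·A·D⁻¹ -/
def τhom : G →* G := mkHom B C (D * A * D⁻¹) sqB sqC (conj_sq D A sqA)

/-- its inverse A ↦ D⁻¹·C·D, B ↦ A, C ↦ B -/
def σhom : G →* G := mkHom (D⁻¹ * C * D⁻¹⁻¹) A B (conj_sq D⁻¹ C sqC) sqA sqB

lemma τA : τhom A = B := mkHom_A _ _ _ _ _ _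
lemma τB : τhom B = C := mkHom_B _ _ _ _ _ _
lemma τC : τhom C = D * A * D⁻¹ := mkHom_C _ _ _ _ _ _
lemma σA : σhom A = D⁻¹ * C * D⁻¹⁻¹ := mkHom_A _ _ _ _ _ _
lemma σB : σhom B = A := mkHom_B _ _ _ _ _ _
lemma σC : σhom C = B := mkHom_C _ _ _ _ _ _

lemma τD : τhom D = D := by
  have h : τhom D = τhom C * τhom B * τhom A := by
    rw [show D = C * B * A from rfl, map_mul, map_mul]
  rw [h, τA, τB, τC]
  simp only [D]
  group

lemma σD : σhom D = D := by
  have h : σhom D = σhom C * σhom B * σhom A := by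
    rw [show D = C * B * A from rfl, map_mul, map_mul]
  rw [h, σA, σB, σC]
  simp only [D]
  group

lemma στ : σhom.comp τhom = MonoidHom.id G := by
  apply hom_eq_id
  · rw [MonoidHom.comp_apply, τA, σB]
  · rw [MonoidHom.comp_apply, τB, σC]
  · rw [MonoidHom.comp_apply, τC]
    simp only [map_mul, map_inv, σD, σA]
    group

lemma τσ : τhom.comp σhom = MonoidHom.id G := by
  apply hom_eq_id
  · rw [MonoidHom.comp_apply, σA]
    simp only [map_mul, map_inv, τD, τC]
    group
  · rw [MonoidHom.comp_apply, σB, τA]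
  · rw [MonoidHom.comp_apply, σC, τB]

lemma στ_apply (g : G) : σhom (τhom g) = g := by
  rw [← MonoidHom.comp_apply, στ]; rfl

lemma τσ_apply (g : G) : τhom (σhom g) = g := by
  rw [← MonoidHom.comp_apply, τσ]; rfl

lemma bijτ : Function.Bijective τhom :=
  ⟨Function.LeftInverse.injective στ_apply, Function.RightInverse.surjective τσ_apply⟩

lemma closure_of_surj (φ : G →* G) (hs : Function.Surjective φ) :
    Subgroup.closure ({φ A, φ B, φ C} : Set G) = ⊤ := by
  have h : ({φ A, φ B, φ C} : Set G) = φ '' {A, B, C} := by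
    rw [Set.image_insert_eq, Set.image_insert_eq, Set.image_singleton]
  rw [h, ← MonoidHom.map_closure, closure_ABC]
  exact Subgroup.map_top_of_surjective φ hs

lemma pack (φ : G →* G) (hbij : Function.Bijective φ)
    (x y z : G) (hx : φ A = x) (hy : φ B = y) (hz : φ C = z) :
    Subgroup.closure ({x, y, z} : Set G) = ⊤ ∧
    ∃ ρ : G →* G, (ρ A = x ∧ ρ B = y ∧ ρ C = z) ∧ Function.Bijective ρ := by
  subst hx hy hz
  exact ⟨closure_of_surj φ hbij.2, φ, ⟨rfl, rfl, rfl⟩, hbij⟩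

lemma W1 : D * A * D⁻¹ * C * B = D := by
  simp only [D]
  group

lemma W2 : D * B * D⁻¹ * (D * A * D⁻¹) * C = D := by
  simp only [D]
  group

end Aux

/-- Properties of the sequence of elliptic generators P. -/
theorem stmt2 (P : ℤ → G)
    (hP0 : ∀ m : ℤ, P (3 * m) = D ^ m * A * (D ^ m)⁻¹)
    (hP1 : ∀ m : ℤ, P (3 * m + 1) = D ^ m * B * (D ^ m)⁻¹)
    (hP2 : ∀ m : ℤ, P (3 * m + 2) = D ^ m * C * (D ^ m)⁻¹)
    (j : ℤ) :
    P j ^ 2 = 1 ∧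
    P (j + 2) * P (j + 1) * P j = D ∧
    Subgroup.closure {P j, P (j + 1), P (j + 2)} = ⊤ ∧
    ∃ φ : G →* G, (φ A = P j ∧ φ B = P (j + 1) ∧ φ C = P (j + 2)) ∧
      Function.Bijective φ := by
  obtain ⟨m, r, hr, rfl⟩ : ∃ m r : ℤ, (r = 0 ∨ r = 1 ∨ r = 2) ∧ j = 3 * m + r :=
    ⟨j / 3, j % 3, by omega, by omega⟩
  rcases hr with rfl | rfl | rfl
  · -- r = 0
    have e0 : P (3 * m + 0) = D ^ m * A * (D ^ m)⁻¹ := by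
      rw [show (3 * m + 0 : ℤ) = 3 * m by ring]; exact hP0 m
    have e1 : P (3 * m + 0 + 1) = D ^ m * B * (D ^ m)⁻¹ := by
      rw [show (3 * m + 0 + 1 : ℤ) = 3 * m + 1 by ring]; exact hP1 m
    have e2 : P (3 * m + 0 + 2) = D ^ m * C * (D ^ m)⁻¹ := by
      rw [show (3 * m + 0 + 2 : ℤ) = 3 * m + 2 by ring]; exact hP2 m
    rw [e0, e1, e2]
    set κ := MulAut.conj (D ^ m) with hκ
    have hbij : Function.Bijective ⇑κ.toMonoidHom := κ.bijective
    have hA' : κ.toMonoidHom A = D ^ m * A * (D ^ m)⁻¹ := by simp only [hκ, MulEquiv.coe_toMonoidHom, MulAut.conj_apply]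
    have hB' : κ.toMonoidHom B = D ^ m * B * (D ^ m)⁻¹ := by simp only [hκ, MulEquiv.coe_toMonoidHom, MulAut.conj_apply]
    have hC' : κ.toMonoidHom C = D ^ m * C * (D ^ m)⁻¹ := by simp only [hκ, MulEquiv.coe_toMonoidHom, MulAut.conj_apply]
    obtain ⟨hcl, hex⟩ := pack κ.toMonoidHom hbij _ _ _ hA' hB' hC'
    refine ⟨conj_sq' _ _ sqA, ?_, hcl, hex⟩
    calc D ^ m * C * (D ^ m)⁻¹ * (D ^ m * B * (D ^ m)⁻¹) * (D ^ m * A * (D ^ m)⁻¹)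
        = D ^ m * (C * B * A) * (D ^ m)⁻¹ := by group
      _ = D ^ m * D * (D ^ m)⁻¹ := by rw [show (C * B * A : G) = D from rfl]
      _ = D := by group
  · -- r = 1
    have e0 : P (3 * m + 1) = D ^ m * B * (D ^ m)⁻¹ := hP1 m
    have e1 : P (3 * m + 1 + 1) = D ^ m * C * (D ^ m)⁻¹ := by
      rw [show (3 * m + 1 + 1 : ℤ) = 3 * m + 2 by ring]; exact hP2 m
    have e2 : P (3 * m + 1 + 2) = D ^ (m + 1) * A * (D ^ (m + 1))⁻¹ := by
      rw [show (3 * m + 1 + 2 : ℤ) = 3 * (m + 1) by ring]; exact hP0 (m + 1)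
    rw [e0, e1, e2]
    set κ := MulAut.conj (D ^ m) with hκ
    set φ : G →* G := κ.toMonoidHom.comp τhom with hφ
    have hbij : Function.Bijective ⇑φ := by
      rw [hφ, MonoidHom.coe_comp]
      exact κ.bijective.comp bijτ
    have hA' : φ A = D ^ m * B * (D ^ m)⁻¹ := by
      rw [hφ, MonoidHom.comp_apply, τA]; simp only [hκ, MulEquiv.coe_toMonoidHom, MulAut.conj_apply]
    have hB' : φ B = D ^ m * C * (D ^ m)⁻¹ := by
      rw [hφ, MonoidHom.comp_apply, τB]; simp only [hκ, MulEquiv.coe_toMonoidHom, MulAut.conj_apply]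
    have hC' : φ C = D ^ (m + 1) * A * (D ^ (m + 1))⁻¹ := by
      rw [hφ, MonoidHom.comp_apply, τC]
      simp only [hκ, MulEquiv.coe_toMonoidHom, MulAut.conj_apply]
      group
    obtain ⟨hcl, hex⟩ := pack φ hbij _ _ _ hA' hB' hC'
    refine ⟨conj_sq' _ _ sqB, ?_, hcl, hex⟩
    calc D ^ (m + 1) * A * (D ^ (m + 1))⁻¹ * (D ^ m * C * (D ^ m)⁻¹) * (D ^ m * B * (D ^ m)⁻¹)
        = D ^ m * (D * A * D⁻¹ * C * B) * (D ^ m)⁻¹ := by group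
      _ = D ^ m * D * (D ^ m)⁻¹ := by rw [W1]
      _ = D := by group
  · -- r = 2
    have e0 : P (3 * m + 2) = D ^ m * C * (D ^ m)⁻¹ := hP2 m
    have e1 : P (3 * m + 2 + 1) = D ^ (m + 1) * A * (D ^ (m + 1))⁻¹ := by
      rw [show (3 * m + 2 + 1 : ℤ) = 3 * (m + 1) by ring]; exact hP0 (m + 1)
    have e2 : P (3 * m + 2 + 2) = D ^ (m + 1) * B * (D ^ (m + 1))⁻¹ := by
      rw [show (3 * m + 2 + 2 : ℤ) = 3 * (m + 1) + 1 by ring]; exact hP1 (m + 1)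
    rw [e0, e1, e2]
    set κ := MulAut.conj (D ^ m) with hκ
    set φ : G →* G := κ.toMonoidHom.comp (τhom.comp τhom) with hφ
    have hbij : Function.Bijective ⇑φ := by
      rw [hφ, MonoidHom.coe_comp, MonoidHom.coe_comp]
      exact κ.bijective.comp (bijτ.comp bijτ)
    have hA' : φ A = D ^ m * C * (D ^ m)⁻¹ := by
      rw [hφ, MonoidHom.comp_apply, MonoidHom.comp_apply, τA, τB]
      simp only [hκ, MulEquiv.coe_toMonoidHom, MulAut.conj_apply]
    have hB' : φ B = D ^ (m + 1) * A * (D ^ (m + 1))⁻¹ := by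
      rw [hφ, MonoidHom.comp_apply, MonoidHom.comp_apply, τB, τC]
      simp only [hκ, MulEquiv.coe_toMonoidHom, MulAut.conj_apply]
      group
    have hC' : φ C = D ^ (m + 1) * B * (D ^ (m + 1))⁻¹ := by
      rw [hφ, MonoidHom.comp_apply, MonoidHom.comp_apply, τC]
      have h2 : τhom (D * A * D⁻¹) = D * B * D⁻¹ := by
        simp only [map_mul, map_inv, τD, τA]
      rw [h2]
      simp only [hκ, MulEquiv.coe_toMonoidHom, MulAut.conj_apply]
      group
    obtain ⟨hcl, hex⟩ := pack φ hbij _ _ _ hA' hB' hC'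
    refine ⟨conj_sq' _ _ sqC, ?_, hcl, hex⟩
    calc D ^ (m + 1) * B * (D ^ (m + 1))⁻¹ * (D ^ (m + 1) * A * (D ^ (m + 1))⁻¹) *
          (D ^ m * C * (D ^ m)⁻¹)
        = D ^ m * (D * B * D⁻¹ * (D * A * D⁻¹) * C) * (D ^ m)⁻¹ := by group
      _ = D ^ m * D * (D ^ m)⁻¹ := by rw [W2]
      _ = D := by group
end

section
/- Every matrix φ ∈ SL(2,ℤ) with |trace(φ)| > 2 is conjugate in SL(2,ℤ) to a matrix of the form ε·R^{a₁}·L^{b₁}·R^{a₂}·L^{b₂}⋯R^{a_k}·L^{b_k}, where ε ∈ {1, −1}, k ≥ 1, and a₁, b₁, a₂, b₂, …, a_k, b_k are positive integers. -/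
/-- The matrix R = [[1,1],[0,1]] in SL(2,ℤ). -/
def Rm : Matrix.SpecialLinearGroup (Fin 2) ℤ :=
  ⟨!![1, 1; 0, 1], by simp [Matrix.det_fin_two_of]⟩

/-- The matrix L = [[1,0],[1,1]] in SL(2,ℤ). -/
def Lm : Matrix.SpecialLinearGroup (Fin 2) ℤ :=
  ⟨!![1, 0; 1, 1], by simp [Matrix.det_fin_two_of]⟩

abbrev SL2 := Matrix.SpecialLinearGroup (Fin 2) ℤ

def Sm : SL2 := ⟨!![0, -1; 1, 0], by simp [Matrix.det_fin_two_of]⟩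

lemma Rm_pow (n : ℕ) : ((Rm ^ n : SL2) : Matrix (Fin 2) (Fin 2) ℤ) = !![1, (n:ℤ); 0, 1] := by
  induction n with
  | zero => simp [Matrix.eta_fin_two (1 : Matrix (Fin 2) (Fin 2) ℤ)]
  | succ n ih => rw [pow_succ, Matrix.SpecialLinearGroup.coe_mul, ih]; simp [Rm, Matrix.mul_fin_two]; ring_nf

lemma Lm_pow (n : ℕ) : ((Lm ^ n : SL2) : Matrix (Fin 2) (Fin 2) ℤ) = !![1, 0; (n:ℤ), 1] := by
  induction n with
  | zero => simp [Matrix.eta_fin_two (1 : Matrix (Fin 2) (Fin 2) ℤ)]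
  | succ n ih => rw [pow_succ, Matrix.SpecialLinearGroup.coe_mul, ih]; simp [Lm, Matrix.mul_fin_two]

lemma SL2_ext {A B : SL2} (h : (A : Matrix (Fin 2) (Fin 2) ℤ) = B) : A = B := Subtype.ext h

lemma Rm_inv : ((Rm⁻¹ : SL2) : Matrix (Fin 2) (Fin 2) ℤ) = !![1, -1; 0, 1] := by
  have h : Rm * ⟨!![1, -1; 0, 1], by simp [Matrix.det_fin_two_of]⟩ = 1 := by
    apply SL2_ext
    show (Rm : Matrix (Fin 2) (Fin 2) ℤ) * !![1, -1; 0, 1] = 1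
    simp [Rm, Matrix.mul_fin_two, Matrix.eta_fin_two (1 : Matrix (Fin 2) (Fin 2) ℤ)]
  rw [inv_eq_of_mul_eq_one_right h]

lemma Lm_inv : ((Lm⁻¹ : SL2) : Matrix (Fin 2) (Fin 2) ℤ) = !![1, 0; -1, 1] := by
  have h : Lm * ⟨!![1, 0; -1, 1], by simp [Matrix.det_fin_two_of]⟩ = 1 := by
    apply SL2_ext
    show (Lm : Matrix (Fin 2) (Fin 2) ℤ) * !![1, 0; -1, 1] = 1
    simp [Lm, Matrix.mul_fin_two, Matrix.eta_fin_two (1 : Matrix (Fin 2) (Fin 2) ℤ)]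
  rw [inv_eq_of_mul_eq_one_right h]

lemma Sm_inv : ((Sm⁻¹ : SL2) : Matrix (Fin 2) (Fin 2) ℤ) = !![0, 1; -1, 0] := by
  have h : Sm * ⟨!![0, 1; -1, 0], by simp [Matrix.det_fin_two_of]⟩ = 1 := by
    apply SL2_ext
    show (Sm : Matrix (Fin 2) (Fin 2) ℤ) * !![0, 1; -1, 0] = 1
    simp [Sm, Matrix.mul_fin_two, Matrix.eta_fin_two (1 : Matrix (Fin 2) (Fin 2) ℤ)]
  rw [inv_eq_of_mul_eq_one_right h]

def blockProd (k : ℕ) (a b : ℕ → ℕ) : SL2 := ((List.range k).map fun i => Rm ^ a i * Lm ^ b i).prod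

def Good (W : SL2) : Prop :=
  ∃ k a b, 1 ≤ k ∧ (∀ i < k, 0 < a i ∧ 0 < b i) ∧ W = blockProd k a b

lemma good_base {p q : ℕ} (hp : 0 < p) (hq : 0 < q) : Good (Rm ^ p * Lm ^ q) := by
  refine ⟨1, fun _ => p, fun _ => q, le_refl 1, fun i _ => ⟨hp, hq⟩, ?_⟩
  simp [blockProd]

lemma good_append {W : SL2} (hW : Good W) {p q : ℕ} (hp : 0 < p) (hq : 0 < q) :
    Good (W * (Rm ^ p * Lm ^ q)) := by
  obtain ⟨k, a, b, hk, hab, hWeq⟩ := hW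
  refine ⟨k + 1, fun i => if i < k then a i else p, fun i => if i < k then b i else q,
    le_trans hk (Nat.le_succ k), ?_, ?_⟩
  · intro i hi
    by_cases h : i < k
    · simpa [h] using hab i h
    · simp [h, hp, hq]
  · rw [hWeq]
    unfold blockProd
    rw [List.range_succ, List.map_append, List.prod_append]
    simp only [List.map_cons, List.map_nil, List.prod_cons, List.prod_nil, mul_one]
    congr 1
    · congr 1
      apply List.map_congr_left
      intro i hi
      have : i < k := List.mem_range.mp hi
      simp [this]
    · simp

lemma good_absorb_L {W : SL2} (hW : Good W) {q : ℕ} (hq : 0 < q) : Good (W * Lm ^ q) := by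
  obtain ⟨k, a, b, hk, hab, hWeq⟩ := hW
  obtain ⟨j, rfl⟩ : ∃ j, k = j + 1 := ⟨k - 1, (Nat.succ_pred_eq_of_pos hk).symm⟩
  refine ⟨j + 1, a, fun i => if i = j then b j + q else b i, hk, ?_, ?_⟩
  · intro i hi
    by_cases h : i = j
    · subst h; exact ⟨(hab i hi).1, by simp; omega⟩
    · simpa [h] using hab i hi
  · rw [hWeq]
    unfold blockProd
    rw [List.range_succ]
    simp only [List.map_append, List.prod_append, List.map_cons, List.map_nil, List.prod_cons,
      List.prod_nil, mul_one]
    rw [mul_assoc]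
    congr 1
    · congr 1
      apply List.map_congr_left
      intro i hi
      have : i ≠ j := Nat.ne_of_lt (List.mem_range.mp hi)
      simp [this]
    · simp [pow_add, mul_assoc]

lemma good_absorb_R {W : SL2} (hW : Good W) {p : ℕ} (hp : 0 < p) : Good (Rm ^ p * W) := by
  obtain ⟨k, a, b, hk, hab, hWeq⟩ := hW
  obtain ⟨j, rfl⟩ : ∃ j, k = j + 1 := ⟨k - 1, (Nat.succ_pred_eq_of_pos hk).symm⟩
  refine ⟨j + 1, fun i => if i = 0 then a 0 + p else a i, b, hk, ?_, ?_⟩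
  · intro i hi
    by_cases h : i = 0
    · subst h; exact ⟨by simp; omega, (hab 0 hi).2⟩
    · simpa [h] using hab i hi
  · rw [hWeq]
    unfold blockProd
    rw [List.range_succ_eq_map]
    simp only [List.map_cons, List.prod_cons, List.map_map]
    have hmap : List.map ((fun i => Rm ^ (if i = 0 then a 0 + p else a i) * Lm ^ b i) ∘ Nat.succ)
        (List.range j) = List.map ((fun i => Rm ^ a i * Lm ^ b i) ∘ Nat.succ) (List.range j) := by
      apply List.map_congr_left; intro i hi; simp [Function.comp]
    rw [hmap]
    simp only [if_true, eq_self_iff_true, pow_add, mul_assoc]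
    rw [← mul_assoc, ← mul_assoc, pow_mul_comm]
    simp [mul_assoc]

lemma fin2_mat_eq {a b c d a' b' c' d' : ℤ} (h1 : a = a') (h2 : b = b') (h3 : c = c')
    (h4 : d = d') : !![a, b; c, d] = !![a', b'; c', d'] := by
  subst h1; subst h2; subst h3; subst h4; rfl

lemma det_entries (A : SL2) {a b c d : ℤ} (hA : (A : Matrix (Fin 2) (Fin 2) ℤ) = !![a, b; c, d]) :
    a * d - b * c = 1 := by
  have := A.2
  rw [hA, Matrix.det_fin_two_of] at this
  linarith

lemma conj_R (A : SL2) {a b c d : ℤ} (hA : (A : Matrix (Fin 2) (Fin 2) ℤ) = !![a, b; c, d]) :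
    ((Rm * A * Rm⁻¹ : SL2) : Matrix (Fin 2) (Fin 2) ℤ) = !![a + c, b + d - a - c; c, d - c] := by
  rw [Matrix.SpecialLinearGroup.coe_mul, Matrix.SpecialLinearGroup.coe_mul, Rm_inv, hA,
    show ((Rm : SL2) : Matrix (Fin 2) (Fin 2) ℤ) = !![1, 1; 0, 1] from rfl,
    Matrix.mul_fin_two, Matrix.mul_fin_two]
  exact fin2_mat_eq (by ring) (by ring) (by ring) (by ring)

lemma conj_Rinv (A : SL2) {a b c d : ℤ} (hA : (A : Matrix (Fin 2) (Fin 2) ℤ) = !![a, b; c, d]) :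
    ((Rm⁻¹ * A * Rm⁻¹⁻¹ : SL2) : Matrix (Fin 2) (Fin 2) ℤ) = !![a - c, a + b - c - d; c, c + d] := by
  rw [inv_inv, Matrix.SpecialLinearGroup.coe_mul, Matrix.SpecialLinearGroup.coe_mul, Rm_inv, hA,
    show ((Rm : SL2) : Matrix (Fin 2) (Fin 2) ℤ) = !![1, 1; 0, 1] from rfl,
    Matrix.mul_fin_two, Matrix.mul_fin_two]
  exact fin2_mat_eq (by ring) (by ring) (by ring) (by ring)

lemma conj_L (A : SL2) {a b c d : ℤ} (hA : (A : Matrix (Fin 2) (Fin 2) ℤ) = !![a, b; c, d]) :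
    ((Lm * A * Lm⁻¹ : SL2) : Matrix (Fin 2) (Fin 2) ℤ) = !![a - b, b; a + c - b - d, b + d] := by
  rw [Matrix.SpecialLinearGroup.coe_mul, Matrix.SpecialLinearGroup.coe_mul, Lm_inv, hA,
    show ((Lm : SL2) : Matrix (Fin 2) (Fin 2) ℤ) = !![1, 0; 1, 1] from rfl,
    Matrix.mul_fin_two, Matrix.mul_fin_two]
  exact fin2_mat_eq (by ring) (by ring) (by ring) (by ring)

lemma conj_Linv (A : SL2) {a b c d : ℤ} (hA : (A : Matrix (Fin 2) (Fin 2) ℤ) = !![a, b; c, d]) :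
    ((Lm⁻¹ * A * Lm⁻¹⁻¹ : SL2) : Matrix (Fin 2) (Fin 2) ℤ) = !![a + b, b; c - a + d - b, d - b] := by
  rw [inv_inv, Matrix.SpecialLinearGroup.coe_mul, Matrix.SpecialLinearGroup.coe_mul, Lm_inv, hA,
    show ((Lm : SL2) : Matrix (Fin 2) (Fin 2) ℤ) = !![1, 0; 1, 1] from rfl,
    Matrix.mul_fin_two, Matrix.mul_fin_two]
  exact fin2_mat_eq (by ring) (by ring) (by ring) (by ring)

lemma conj_S (A : SL2) {a b c d : ℤ} (hA : (A : Matrix (Fin 2) (Fin 2) ℤ) = !![a, b; c, d]) :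
    ((Sm * A * Sm⁻¹ : SL2) : Matrix (Fin 2) (Fin 2) ℤ) = !![d, -c; -b, a] := by
  rw [Matrix.SpecialLinearGroup.coe_mul, Matrix.SpecialLinearGroup.coe_mul, Sm_inv, hA,
    show ((Sm : SL2) : Matrix (Fin 2) (Fin 2) ℤ) = !![0, -1; 1, 0] from rfl,
    Matrix.mul_fin_two, Matrix.mul_fin_two]
  exact fin2_mat_eq (by ring) (by ring) (by ring) (by ring)

lemma conj_comp (g h A : SL2) : h * (g * A * g⁻¹) * h⁻¹ = (h * g) * A * (h * g)⁻¹ := by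
  group

lemma stepP1 (A : SL2) {a b c d : ℤ} (hA : (A : Matrix (Fin 2) (Fin 2) ℤ) = !![a, b; c, d])
    (hτ : 3 ≤ a + d) (hb : 1 ≤ b) (hc : c ≤ -1) (ht : 3 ≤ a - d) :
    ∃ (g : SL2) (a' b' c' d' : ℤ), ((g * A * g⁻¹ : SL2) : Matrix (Fin 2) (Fin 2) ℤ) = !![a', b'; c', d'] ∧
      a' + d' = a + d ∧ (a' - d').natAbs < (a - d).natAbs := by
  have hdet := det_entries A hA
  by_cases h1 : -c ≤ a - d - 1
  · exact ⟨Rm, _, _, _, _, conj_R A hA, by ring, by omega⟩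
  · by_cases h2 : b ≤ a - d - 1
    · exact ⟨Lm, _, _, _, _, conj_L A hA, by ring, by omega⟩
    · exfalso
      have hb2 : a - d ≤ b := by omega
      have hc2 : a - d ≤ -c := by omega
      nlinarith [mul_le_mul hb2 hc2 (by omega) (by omega), sq_nonneg (a + d)]

lemma stepP2 (A : SL2) {a b c d : ℤ} (hA : (A : Matrix (Fin 2) (Fin 2) ℤ) = !![a, b; c, d])
    (hτ : 3 ≤ a + d) (hb : b ≤ -1) (hc : 1 ≤ c) (ht : 3 ≤ a - d) :
    ∃ (g : SL2) (a' b' c' d' : ℤ), ((g * A * g⁻¹ : SL2) : Matrix (Fin 2) (Fin 2) ℤ) = !![a', b'; c', d'] ∧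
      a' + d' = a + d ∧ (a' - d').natAbs < (a - d).natAbs := by
  have hdet := det_entries A hA
  by_cases h1 : c ≤ a - d - 1
  · exact ⟨Rm⁻¹, _, _, _, _, conj_Rinv A hA, by ring, by omega⟩
  · by_cases h2 : -b ≤ a - d - 1
    · exact ⟨Lm⁻¹, _, _, _, _, conj_Linv A hA, by ring, by omega⟩
    · exfalso
      have hb2 : a - d ≤ -b := by omega
      have hc2 : a - d ≤ c := by omega
      nlinarith [mul_le_mul hb2 hc2 (by omega) (by omega), sq_nonneg (a + d)]

lemma stepFull (A : SL2) {a b c d : ℤ} (hA : (A : Matrix (Fin 2) (Fin 2) ℤ) = !![a, b; c, d])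
    (hτ : 3 ≤ a + d) (hmix : (1 ≤ b ∧ c ≤ -1) ∨ (b ≤ -1 ∧ 1 ≤ c)) :
    ∃ (g : SL2) (a' b' c' d' : ℤ), ((g * A * g⁻¹ : SL2) : Matrix (Fin 2) (Fin 2) ℤ) = !![a', b'; c', d'] ∧
      a' + d' = a + d ∧ (a' - d').natAbs < (a - d).natAbs := by
  have hdet := det_entries A hA
  have h9 : 9 ≤ (a - d) * (a - d) := by
    rcases hmix with ⟨hb, hc⟩ | ⟨hb, hc⟩
    · nlinarith [mul_le_mul hb (by omega : 1 ≤ -c) (by omega) (by omega)]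
    · nlinarith [mul_le_mul (by omega : 1 ≤ -b) hc (by omega) (by omega)]
  rcases le_or_gt (a - d) 0 with hts | hts
  · -- t ≤ -3 : conjugate by S first
    have ht' : 3 ≤ d - a := by nlinarith
    have hψ := conj_S A hA
    rcases hmix with ⟨hb, hc⟩ | ⟨hb, hc⟩
    · obtain ⟨g, a', b', c', d', hcoe, htr, hlt⟩ :=
        stepP1 (Sm * A * Sm⁻¹) hψ (by omega) (by omega) (by omega) (by omega)
      rw [conj_comp] at hcoe
      exact ⟨g * Sm, a', b', c', d', hcoe, by omega, by omega⟩
    · obtain ⟨g, a', b', c', d', hcoe, htr, hlt⟩ :=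
        stepP2 (Sm * A * Sm⁻¹) hψ (by omega) (by omega) (by omega) (by omega)
      rw [conj_comp] at hcoe
      exact ⟨g * Sm, a', b', c', d', hcoe, by omega, by omega⟩
  · have ht' : 3 ≤ a - d := by nlinarith
    rcases hmix with ⟨hb, hc⟩ | ⟨hb, hc⟩
    · exact stepP1 A hA hτ hb hc ht'
    · exact stepP2 A hA hτ hb hc ht'

lemma pos_diag {a b c d : ℤ} (hdet : a * d - b * c = 1) (hτ : 3 ≤ a + d) (hb : 1 ≤ b)
    (hc : 1 ≤ c) : 1 ≤ a ∧ 1 ≤ d := by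
  constructor <;> nlinarith [mul_le_mul hb hc (by omega) (by omega)]

lemma reduce : ∀ N : ℕ, ∀ A : SL2, ∀ a b c d : ℤ,
    (A : Matrix (Fin 2) (Fin 2) ℤ) = !![a, b; c, d] → (a - d).natAbs ≤ N → 3 ≤ a + d →
    ∃ (g : SL2) (a' b' c' d' : ℤ),
      ((g * A * g⁻¹ : SL2) : Matrix (Fin 2) (Fin 2) ℤ) = !![a', b'; c', d'] ∧
      1 ≤ a' ∧ 1 ≤ b' ∧ 1 ≤ c' ∧ 1 ≤ d' := by
  intro N
  induction N with
  | zero =>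
    intro A a b c d hA hN hτ
    have hdet := det_entries A hA
    have ht0 : a - d = 0 := by omega
    by_cases hb : 1 ≤ b ∧ 1 ≤ c
    · obtain ⟨ha, hd⟩ := pos_diag hdet hτ hb.1 hb.2
      refine ⟨1, a, b, c, d, ?_, ha, hb.1, hb.2, hd⟩
      simpa using hA
    · by_cases hc : b ≤ -1 ∧ c ≤ -1
      · have hψ := conj_S A hA
        have hdet' := det_entries _ hψ
        obtain ⟨hd', ha'⟩ := pos_diag hdet' (by omega) (by omega) (by omega)
        exact ⟨Sm, d, -c, -b, a, hψ, hd', by omega, by omega, ha'⟩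
      · exfalso
        have hbne : b ≠ 0 := by
          intro h
          subst h
          simp only [zero_mul, mul_zero, sub_zero] at hdet
          rcases Int.mul_eq_one_iff_eq_one_or_neg_one.mp hdet with
            ⟨h1, h2⟩ | ⟨h1, h2⟩ <;> omega
        have hcne : c ≠ 0 := by
          intro h
          subst h
          simp only [zero_mul, mul_zero, sub_zero] at hdet
          rcases Int.mul_eq_one_iff_eq_one_or_neg_one.mp hdet with
            ⟨h1, h2⟩ | ⟨h1, h2⟩ <;> omega
        have hmix : (1 ≤ b ∧ c ≤ -1) ∨ (b ≤ -1 ∧ 1 ≤ c) := by omega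
        have h9 : 9 ≤ (a - d) * (a - d) := by
          rcases hmix with ⟨hb', hc'⟩ | ⟨hb', hc'⟩
          · nlinarith [mul_le_mul hb' (by omega : 1 ≤ -c) (by omega) (by omega)]
          · nlinarith [mul_le_mul (by omega : 1 ≤ -b) hc' (by omega) (by omega)]
        rw [ht0] at h9
        norm_num at h9
  | succ N IH =>
    intro A a b c d hA hN hτ
    have hdet := det_entries A hA
    by_cases hb : 1 ≤ b ∧ 1 ≤ c
    · obtain ⟨ha, hd⟩ := pos_diag hdet hτ hb.1 hb.2
      refine ⟨1, a, b, c, d, ?_, ha, hb.1, hb.2, hd⟩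
      simpa using hA
    · by_cases hc : b ≤ -1 ∧ c ≤ -1
      · have hψ := conj_S A hA
        have hdet' := det_entries _ hψ
        obtain ⟨hd', ha'⟩ := pos_diag hdet' (by omega) (by omega) (by omega)
        exact ⟨Sm, d, -c, -b, a, hψ, hd', by omega, by omega, ha'⟩
      · have hbne : b ≠ 0 := by
          intro h
          subst h
          simp only [zero_mul, mul_zero, sub_zero] at hdet
          rcases Int.mul_eq_one_iff_eq_one_or_neg_one.mp hdet with
            ⟨h1, h2⟩ | ⟨h1, h2⟩ <;> omega
        have hcne : c ≠ 0 := by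
          intro h
          subst h
          simp only [zero_mul, mul_zero, sub_zero] at hdet
          rcases Int.mul_eq_one_iff_eq_one_or_neg_one.mp hdet with
            ⟨h1, h2⟩ | ⟨h1, h2⟩ <;> omega
        have hmix : (1 ≤ b ∧ c ≤ -1) ∨ (b ≤ -1 ∧ 1 ≤ c) := by omega
        obtain ⟨g₁, a', b', c', d', hcoe, htr, hlt⟩ := stepFull A hA hτ hmix
        obtain ⟨g₂, a'', b'', c'', d'', hcoe₂, h₂⟩ :=
          IH (g₁ * A * g₁⁻¹) a' b' c' d' hcoe (by omega) (by omega)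
        rw [conj_comp] at hcoe₂
        exact ⟨g₂ * g₁, a'', b'', c'', d'', hcoe₂, h₂⟩

lemma claimE : ∀ N : ℕ, ∀ A : SL2, ∀ a b c d : ℤ,
    (A : Matrix (Fin 2) (Fin 2) ℤ) = !![a, b; c, d] →
    (a + b + c + d).toNat ≤ N → 1 ≤ a → 1 ≤ b → 1 ≤ c → 1 ≤ d →
    (∃ m n W, Good W ∧ A = Lm ^ m * W * Rm ^ n) ∨
    (∃ m n, 1 ≤ m ∧ 1 ≤ n ∧ A = Lm ^ m * Rm ^ n) := by
  intro N
  induction N with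
  | zero =>
    intro A a b c d hA hN h1 h2 h3 h4
    exfalso; omega
  | succ N IH =>
    intro A a b c d hA hN ha hb hc hd
    have hdet : a * d - b * c = 1 := by
      have := A.2
      rw [hA, Matrix.det_fin_two_of] at this
      linarith
    by_cases hab : b < a
    · -- strip an L from the right
      have hcd : d ≤ c := by nlinarith
      have hA' : ((A * Lm⁻¹ : SL2) : Matrix (Fin 2) (Fin 2) ℤ) = !![a - b, b; c - d, d] := by
        rw [Matrix.SpecialLinearGroup.coe_mul, Lm_inv, hA, Matrix.mul_fin_two]
        exact fin2_mat_eq (by ring) (by ring) (by ring) (by ring)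
      have hALm : A = (A * Lm⁻¹) * Lm := by rw [mul_assoc, inv_mul_cancel, mul_one]
      by_cases hc2 : c = d
      · -- base: A = R^b * L^1, with d = 1
        have hdet' : (a - b) * d = 1 := by
          have := (A * Lm⁻¹ : SL2).2
          rw [hA', Matrix.det_fin_two_of] at this
          rw [hc2] at this
          simpa using this
        have hd1 : d = 1 ∧ a - b = 1 := by
          rcases Int.mul_eq_one_iff_eq_one_or_neg_one.mp hdet' with ⟨h1, h2⟩ | ⟨h1, h2⟩ <;> omega
        left
        refine ⟨0, 0, Rm ^ b.toNat * Lm ^ 1, good_base (by omega) one_pos, ?_⟩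
        rw [pow_zero, one_mul, pow_zero, mul_one]
        apply SL2_ext
        rw [Matrix.SpecialLinearGroup.coe_mul, Rm_pow, Lm_pow, hA, Matrix.mul_fin_two,
          Int.toNat_of_nonneg (by omega : (0:ℤ) ≤ b)]
        exact fin2_mat_eq (by omega) (by omega) (by omega) (by omega)
      · -- recurse on A * Lm⁻¹
        have hstep := IH (A * Lm⁻¹) (a - b) b (c - d) d hA' (by omega) (by omega) hb (by omega) hd
        rcases hstep with ⟨m, n, W, hW, hEq⟩ | ⟨m, n, hm, hn, hEq⟩
        · by_cases hn0 : n = 0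
          · left
            refine ⟨m, 0, W * Lm ^ 1, good_absorb_L hW one_pos, ?_⟩
            rw [hALm, hEq, hn0]
            simp [pow_one, mul_assoc]
          · left
            refine ⟨m, 0, W * (Rm ^ n * Lm ^ 1), good_append hW (by omega) one_pos, ?_⟩
            rw [hALm, hEq]
            simp [pow_one, mul_assoc]
        · left
          refine ⟨m, 0, Rm ^ n * Lm ^ 1, good_base hn one_pos, ?_⟩
          rw [hALm, hEq]
          simp [pow_one, mul_assoc]
    · -- strip an R from the right
      push_neg at hab
      have hdc : c < d := by nlinarith
      have hA' : ((A * Rm⁻¹ : SL2) : Matrix (Fin 2) (Fin 2) ℤ) = !![a, b - a; c, d - c] := by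
        rw [Matrix.SpecialLinearGroup.coe_mul, Rm_inv, hA, Matrix.mul_fin_two]
        exact fin2_mat_eq (by ring) (by ring) (by ring) (by ring)
      have hARm : A = (A * Rm⁻¹) * Rm := by rw [mul_assoc, inv_mul_cancel, mul_one]
      by_cases hb2 : b = a
      · -- base: A = L^c * R^1, with a = 1
        have hdet' : a * (d - c) = 1 := by
          have := (A * Rm⁻¹ : SL2).2
          rw [hA', Matrix.det_fin_two_of, hb2] at this
          simpa using this
        have ha1 : a = 1 ∧ d - c = 1 := by
          rcases Int.mul_eq_one_iff_eq_one_or_neg_one.mp hdet' with ⟨h1, h2⟩ | ⟨h1, h2⟩ <;> omega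
        right
        refine ⟨c.toNat, 1, by omega, le_refl 1, ?_⟩
        apply SL2_ext
        rw [Matrix.SpecialLinearGroup.coe_mul, pow_one, Lm_pow,
          Int.toNat_of_nonneg (by omega : (0:ℤ) ≤ c), hA,
          show ((Rm : SL2) : Matrix (Fin 2) (Fin 2) ℤ) = !![1, 1; 0, 1] from rfl,
          Matrix.mul_fin_two]
        exact fin2_mat_eq (by omega) (by omega) (by omega) (by omega)
      · -- recurse on A * Rm⁻¹
        have hstep := IH (A * Rm⁻¹) a (b - a) c (d - c) hA' (by omega) ha (by omega) hc (by omega)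
        rcases hstep with ⟨m, n, W, hW, hEq⟩ | ⟨m, n, hm, hn, hEq⟩
        · left
          refine ⟨m, n + 1, W, hW, ?_⟩
          rw [hARm, hEq, pow_succ]
          simp [mul_assoc]
        · right
          refine ⟨m, n + 1, hm, by omega, ?_⟩
          rw [hARm, hEq, pow_succ]
          simp [mul_assoc]

lemma main_pos (φ : SL2) (hτ : 3 ≤ (φ : Matrix (Fin 2) (Fin 2) ℤ) 0 0 +
    (φ : Matrix (Fin 2) (Fin 2) ℤ) 1 1) :
    ∃ g : SL2, Good (g * φ * g⁻¹) := by
  have hA : (φ : Matrix (Fin 2) (Fin 2) ℤ) =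
      !![(φ : Matrix (Fin 2) (Fin 2) ℤ) 0 0, (φ : Matrix (Fin 2) (Fin 2) ℤ) 0 1;
         (φ : Matrix (Fin 2) (Fin 2) ℤ) 1 0, (φ : Matrix (Fin 2) (Fin 2) ℤ) 1 1] :=
    Matrix.eta_fin_two _
  obtain ⟨g₁, a, b, c, d, hcoe, ha, hb, hc, hd⟩ :=
    reduce _ φ _ _ _ _ hA (le_refl _) hτ
  rcases claimE (a + b + c + d).toNat (g₁ * φ * g₁⁻¹) a b c d hcoe (le_refl _) ha hb hc hd with
    ⟨m, n, W, hW, hEq⟩ | ⟨m, n, hm, hn, hEq⟩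
  · by_cases hn0 : n = 0
    · by_cases hm0 : m = 0
      · refine ⟨g₁, ?_⟩
        rw [hEq, hn0, hm0]
        simpa using hW
      · refine ⟨(Lm ^ m)⁻¹ * g₁, ?_⟩
        rw [← conj_comp, hEq, hn0]
        have : (Lm ^ m)⁻¹ * (Lm ^ m * W * Rm ^ 0) * ((Lm ^ m)⁻¹)⁻¹ = W * Lm ^ m := by group
        rw [this]
        exact good_absorb_L hW (by omega)
    · by_cases hm0 : m = 0
      · refine ⟨Rm ^ n * g₁, ?_⟩
        rw [← conj_comp, hEq, hm0]
        have : Rm ^ n * (Lm ^ 0 * W * Rm ^ n) * (Rm ^ n)⁻¹ = Rm ^ n * W := by group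
        rw [this]
        exact good_absorb_R hW (by omega)
      · refine ⟨(Lm ^ m)⁻¹ * g₁, ?_⟩
        rw [← conj_comp, hEq]
        have : (Lm ^ m)⁻¹ * (Lm ^ m * W * Rm ^ n) * ((Lm ^ m)⁻¹)⁻¹ = W * (Rm ^ n * Lm ^ m) := by
          group
        rw [this]
        exact good_append hW (by omega) (by omega)
  · refine ⟨(Lm ^ m)⁻¹ * g₁, ?_⟩
    rw [← conj_comp, hEq]
    have : (Lm ^ m)⁻¹ * (Lm ^ m * Rm ^ n) * ((Lm ^ m)⁻¹)⁻¹ = Rm ^ n * Lm ^ m := by group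
    rw [this]
    exact good_base hn hm

/-- Every φ ∈ SL(2,ℤ) with |trace φ| > 2 is conjugate in SL(2,ℤ) to
ε·R^{a₁}·L^{b₁}⋯R^{a_k}·L^{b_k} with ε = ±1, k ≥ 1 and all aᵢ, bᵢ positive. -/
theorem stmt7 (φ : Matrix.SpecialLinearGroup (Fin 2) ℤ)
    (hφ : 2 < |Matrix.trace (φ : Matrix (Fin 2) (Fin 2) ℤ)|) :
    ∃ (g : Matrix.SpecialLinearGroup (Fin 2) ℤ) (e : ℤ) (k : ℕ) (a b : ℕ → ℕ),
      (e = 1 ∨ e = -1) ∧ 1 ≤ k ∧ (∀ i < k, 0 < a i ∧ 0 < b i) ∧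
      ((g * φ * g⁻¹ : Matrix.SpecialLinearGroup (Fin 2) ℤ) : Matrix (Fin 2) (Fin 2) ℤ) =
        e • ((((List.range k).map fun i => Rm ^ a i * Lm ^ b i).prod :
          Matrix.SpecialLinearGroup (Fin 2) ℤ) : Matrix (Fin 2) (Fin 2) ℤ) := by
  rw [Matrix.trace_fin_two, lt_abs] at hφ
  rcases hφ with hφ | hφ
  · obtain ⟨g, k, a, b, hk, hab, hWeq⟩ := main_pos φ (by linarith)
    refine ⟨g, 1, k, a, b, Or.inl rfl, hk, hab, ?_⟩
    rw [one_smul, hWeq]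
    rfl
  · set M : Matrix (Fin 2) (Fin 2) ℤ := (φ : Matrix (Fin 2) (Fin 2) ℤ)
    have hdet : (-M).det = 1 := by
      rw [Matrix.det_neg]
      simp [M, φ.2]
    set φ' : SL2 := ⟨-M, hdet⟩ with hφ'
    have h00 : (φ' : Matrix (Fin 2) (Fin 2) ℤ) 0 0 = -(M 0 0) := rfl
    have h11 : (φ' : Matrix (Fin 2) (Fin 2) ℤ) 1 1 = -(M 1 1) := rfl
    obtain ⟨g, k, a, b, hk, hab, hWeq⟩ := main_pos φ' (by rw [h00, h11]; linarith)
    refine ⟨g, -1, k, a, b, Or.inr rfl, hk, hab, ?_⟩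
    have hc : ((g * φ' * g⁻¹ : SL2) : Matrix (Fin 2) (Fin 2) ℤ) =
        ((blockProd k a b : SL2) : Matrix (Fin 2) (Fin 2) ℤ) := by rw [hWeq]
    rw [Matrix.SpecialLinearGroup.coe_mul, Matrix.SpecialLinearGroup.coe_mul] at hc
    rw [show ((φ' : SL2) : Matrix (Fin 2) (Fin 2) ℤ) = -M from rfl] at hc
    rw [Matrix.SpecialLinearGroup.coe_mul, Matrix.SpecialLinearGroup.coe_mul]
    rw [neg_smul, one_smul]
    rw [show ((List.range k).map fun i => Rm ^ a i * Lm ^ b i).prod = blockProd k a b from rfl]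
    rw [← hc]
    simp [M, mul_neg, neg_mul]
end

section
/- For all m, n ∈ ℤ: if f_n = R then (Q_{3m,n+1}, Q_{3m+1,n+1}, Q_{3m+2,n+1}) = (Q_{3m,n}, Q_{3m+1,n}·Q_{3m+2,n}·Q_{3m+1,n}⁻¹, Q_{3m+1,n}), and if f_n = L then (Q_{3m,n+1}, Q_{3m+1,n+1}, Q_{3m+2,n+1}) = (Q_{3m+1,n}, Q_{3m+1,n}·Q_{3m,n}·Q_{3m+1,n}⁻¹, Q_{3m+2,n}). -/
/-- How the triple (Q_{3m,n+1}, Q_{3m+1,n+1}, Q_{3m+2,n+1}) is obtained from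
(Q_{3m,n}, Q_{3m+1,n}, Q_{3m+2,n}), according to whether f_n = R or f_n = L. -/
theorem stmt10
    (R L : MulAut G)
    (hRA : R A = A) (hRB : R B = B * C * B⁻¹) (hRC : R C = B)
    (hLA : L A = B) (hLB : L B = B * A * B⁻¹) (hLC : L C = C)
    (P : ℤ → G)
    (hP0 : ∀ m : ℤ, P (3 * m) = D ^ m * A * (D ^ m)⁻¹)
    (hP1 : ∀ m : ℤ, P (3 * m + 1) = D ^ m * B * (D ^ m)⁻¹)
    (hP2 : ∀ m : ℤ, P (3 * m + 2) = D ^ m * C * (D ^ m)⁻¹)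
    (p : ℤ) (hp : 2 ≤ p)
    (f : ℤ → MulAut G) (hfRL : ∀ n : ℤ, f n = R ∨ f n = L)
    (hfper : ∀ n : ℤ, f (n + p) = f n) (hf0 : f 0 = L) (hf1 : f 1 = R)
    (F : ℤ → MulAut G) (hF0 : F 0 = 1) (hF : ∀ n : ℤ, F n = F (n - 1) * f n)
    (Q : ℤ → ℤ → G) (hQ : ∀ m n : ℤ, Q m n = F (n - 1) (P m)) :
    ∀ m n : ℤ,
      (f n = R →
        Q (3 * m) (n + 1) = Q (3 * m) n ∧
        Q (3 * m + 1) (n + 1) = Q (3 * m + 1) n * Q (3 * m + 2) n * (Q (3 * m + 1) n)⁻¹ ∧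
        Q (3 * m + 2) (n + 1) = Q (3 * m + 1) n) ∧
      (f n = L →
        Q (3 * m) (n + 1) = Q (3 * m + 1) n ∧
        Q (3 * m + 1) (n + 1) = Q (3 * m + 1) n * Q (3 * m) n * (Q (3 * m + 1) n)⁻¹ ∧
        Q (3 * m + 2) (n + 1) = Q (3 * m + 2) n) := by

  have hBB : B * B = 1 := by
    have h : (FreeGroup.of 1 * FreeGroup.of 1 : FreeGroup (Fin 3)) ∈
        Subgroup.normalClosure rels :=
      Subgroup.subset_normalClosure (by simp [rels])
    have he : (B * B : G) = QuotientGroup.mk (FreeGroup.of 1 * FreeGroup.of 1) := rfl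
    rw [he]
    exact (QuotientGroup.eq_one_iff _).mpr h
  have hBinv : B⁻¹ = B := by rw [inv_eq_iff_mul_eq_one]; exact hBB
  have hRD : R D = D := by
    show R (C * B * A) = C * B * A
    rw [map_mul, map_mul, hRA, hRB, hRC, hBinv,
      show B * (B * C * B) * A = (B * B) * (C * (B * A)) by group, hBB, one_mul, mul_assoc]
  have hLD : L D = D := by
    show L (C * B * A) = C * B * A
    rw [map_mul, map_mul, hLA, hLB, hLC]
    group
  have key : ∀ m n : ℤ, Q m (n + 1) = F (n - 1) (f n (P m)) := by
    intro m n
    rw [hQ, show n + 1 - 1 = n by ring, hF n]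
    rfl
  intro m n
  constructor
  · intro hfn
    have hRDm : R (D ^ m) = D ^ m := by rw [map_zpow, hRD]
    have h0 : f n (P (3 * m)) = P (3 * m) := by
      rw [hfn, hP0, map_mul, map_mul, map_inv, hRDm, hRA]
    have h1 : f n (P (3 * m + 1)) = P (3 * m + 1) * P (3 * m + 2) * (P (3 * m + 1))⁻¹ := by
      rw [hfn, hP1, hP2, map_mul, map_mul, map_inv, hRDm, hRB]
      group
    have h2 : f n (P (3 * m + 2)) = P (3 * m + 1) := by
      rw [hfn, hP1, hP2, map_mul, map_mul, map_inv, hRDm, hRC]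
    refine ⟨?_, ?_, ?_⟩
    · rw [key, h0, ← hQ]
    · rw [key, h1, map_mul, map_mul, map_inv, ← hQ, ← hQ]
    · rw [key, h2, ← hQ]
  · intro hfn
    have hLDm : L (D ^ m) = D ^ m := by rw [map_zpow, hLD]
    have h0 : f n (P (3 * m)) = P (3 * m + 1) := by
      rw [hfn, hP0, hP1, map_mul, map_mul, map_inv, hLDm, hLA]
    have h1 : f n (P (3 * m + 1)) = P (3 * m + 1) * P (3 * m) * (P (3 * m + 1))⁻¹ := by
      rw [hfn, hP0, hP1, map_mul, map_mul, map_inv, hLDm, hLB]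
      group
    have h2 : f n (P (3 * m + 2)) = P (3 * m + 2) := by
      rw [hfn, hP2, map_mul, map_mul, map_inv, hLDm, hLC]
    refine ⟨?_, ?_, ?_⟩
    · rw [key, h0, ← hQ]
    · rw [key, h1, map_mul, map_mul, map_inv, ← hQ, ← hQ]
    · rw [key, h2, ← hQ]
end

section
/- Suppose f_n = R. Then P_{2m,n} = P_{2m+1,n₊}. Moreover, for (m',n') ∈ ℤ², Q_{m',n'} equals this element if and only if (m',n') belongs to the set {(3m+1, n)} ∪ {(3m+2, k) | n+1 ≤ k ≤ n₊}. -/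
namespace Stmt15

/-- generator -/
def gen (i : Fin 3) : G := PresentedGroup.of i

lemma gen_mul_self (i : Fin 3) : gen i * gen i = 1 := by
  have h : (FreeGroup.of i * FreeGroup.of i) ∈ Subgroup.normalClosure rels := by
    apply Subgroup.subset_normalClosure
    fin_cases i <;> simp [rels]
  have : gen i * gen i = PresentedGroup.mk rels (FreeGroup.of i * FreeGroup.of i) := by
    simp [gen, PresentedGroup.of]
  rw [this]
  exact (QuotientGroup.eq_one_iff _).mpr h

lemma gen_inv (i : Fin 3) : (gen i)⁻¹ = gen i :=
  inv_eq_of_mul_eq_one_right (gen_mul_self i)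

/-- word product -/
def wp (l : List (Fin 3)) : G := (l.map gen).prod

@[simp] lemma wp_nil : wp [] = 1 := rfl
@[simp] lemma wp_cons (i : Fin 3) (l : List (Fin 3)) : wp (i :: l) = gen i * wp l := by
  simp [wp]
lemma wp_append (l m : List (Fin 3)) : wp (l ++ m) = wp l * wp m := by
  simp [wp]
lemma wp_singleton (i : Fin 3) : wp [i] = gen i := by simp

lemma wp_reverse (l : List (Fin 3)) : wp l.reverse = (wp l)⁻¹ := by
  induction l with
  | nil => simp
  | cons i l ih => rw [List.reverse_cons, wp_append, ih, wp_cons]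
                   simp [mul_inv_rev, gen_inv]


abbrev Red (l : List (Fin 3)) : Prop := l.IsChain (· ≠ ·)

def S : Type := {l : List (Fin 3) // Red l}

def pushL (i : Fin 3) : S → S
  | ⟨[], _⟩ => ⟨[i], List.isChain_singleton i⟩
  | ⟨j :: t, h⟩ =>
    if hij : i = j then ⟨t, h.tail⟩
    else ⟨i :: j :: t, h.cons_cons hij⟩

lemma pushL_pushL (i : Fin 3) (s : S) : pushL i (pushL i s) = s := by
  obtain ⟨l, h⟩ := s
  match l, h with
  | [], h => simp [pushL] <;> rfl
  | j :: t, h =>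
    by_cases hij : i = j
    · subst hij
      match t, h with
      | [], h => simp [pushL] <;> rfl
      | k :: t', h =>
        have hik : i ≠ k := (List.isChain_cons_cons.mp h).1
        simp [pushL, hik] <;> rfl
    · simp [pushL, hij] <;> rfl

def pAct (i : Fin 3) : Equiv.Perm S :=
  ⟨pushL i, pushL i, pushL_pushL i, pushL_pushL i⟩

lemma pAct_rels : ∀ r ∈ rels, FreeGroup.lift pAct r = 1 := by
  intro r hr
  have key : ∀ i : Fin 3, FreeGroup.lift pAct (FreeGroup.of i * FreeGroup.of i) = 1 := by
    intro i
    rw [map_mul, FreeGroup.lift_apply_of]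
    ext s
    exact pushL_pushL i s
  rcases hr with h | h | h <;> (subst h; apply key)

def ρ : G →* Equiv.Perm S := PresentedGroup.toGroup pAct_rels

lemma ρ_gen (i : Fin 3) : ρ (gen i) = pAct i := PresentedGroup.toGroup.of pAct_rels

def s0 : S := ⟨[], List.isChain_nil⟩

lemma ρ_wp_cons (i : Fin 3) (l : List (Fin 3)) (s : S) :
    ρ (wp (i :: l)) s = pushL i (ρ (wp l) s) := by
  rw [wp_cons, map_mul, ρ_gen]
  rfl

lemma ρ_wp_red (l : List (Fin 3)) (hl : Red l) : (ρ (wp l) s0).1 = l := by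
  induction l with
  | nil => simp [s0] <;> rfl
  | cons i l ih =>
    have hl' : Red l := hl.tail
    rw [ρ_wp_cons]
    have h1 : ρ (wp l) s0 = ⟨l, hl'⟩ := Subtype.ext (ih hl')
    rw [h1]
    match l, hl with
    | [], _ => simp [pushL]
    | j :: t, hl =>
      have hij : i ≠ j := (List.isChain_cons_cons.mp hl).1
      simp [pushL, hij]

/-- injectivity of reduced words -/
lemma wp_inj {l l' : List (Fin 3)} (hl : Red l) (hl' : Red l') (h : wp l = wp l') : l = l' := by
  have := congrArg (fun g => (ρ g s0).1) h
  simpa [ρ_wp_red l hl, ρ_wp_red l' hl'] using this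


/-! ### palindrome & conjugation lemmas -/

def Pal (l : List (Fin 3)) : Prop := l.reverse = l

lemma pal_getLast? {l : List (Fin 3)} (h : Pal l) : l.getLast? = l.head? := by
  conv_lhs => rw [← h]
  rw [List.getLast?_reverse]

lemma wp_pal_inv {l : List (Fin 3)} (h : Pal l) : (wp l)⁻¹ = wp l := by
  rw [← wp_reverse, h]

lemma wp_pal_sq {l : List (Fin 3)} (h : Pal l) : wp l * wp l = 1 := by
  nth_rewrite 2 [← wp_pal_inv h]
  exact mul_inv_cancel _

lemma red_append_of (l m : List (Fin 3)) (hl : Red l) (hm : Red m)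
    (h : ∀ x y, l.getLast? = some x → m.head? = some y → x ≠ y) : Red (l ++ m) :=
  List.isChain_append.mpr ⟨hl, hm, fun x hx y hy => h x y hx hy⟩

lemma conj_L1 {p q s : List (Fin 3)} (hp : Red p) (hpp : Pal p) (hpq : Pal q)
    (hq : q ≠ []) (hps : p = q ++ s) :
    wp p * wp q * wp p = wp (p ++ s) ∧ Red (p ++ s) ∧ Pal (p ++ s) := by
  have hp2 : p = s.reverse ++ q := by
    conv_lhs => rw [← hpp, hps]
    rw [List.reverse_append, hpq]
  have hqq : ∀ x : G, wp q * (wp q * x) = x := fun x => by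
    rw [← mul_assoc, wp_pal_sq hpq, one_mul]
  have hlist : p ++ s = s.reverse ++ p := by
    conv_lhs => rw [hp2]
    conv_rhs => rw [hps]
    rw [List.append_assoc]
  have hwp : wp p = wp q * wp s := by rw [hps, wp_append]
  have hwp2 : wp p = wp s.reverse * wp q := by rw [hp2, wp_append]
  refine ⟨?_, ?_, ?_⟩
  · rw [hlist, wp_append]
    nth_rewrite 1 [hwp2]
    nth_rewrite 2 [hwp]
    rw [hwp]
    simp [mul_assoc, hqq]
  · rw [hlist]
    have hrev : Red s.reverse ∧ Red q ∧ _ := List.isChain_append.mp (hp2 ▸ hp)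
    refine red_append_of _ _ hrev.1 hp ?_
    intro x y hx hy
    refine hrev.2.2 x (by rw [hx]; rfl) y ?_
    rw [hps, List.head?_append_of_ne_nil q hq] at hy
    rw [hy]; rfl
  · show (p ++ s).reverse = p ++ s
    rw [List.reverse_append, hpp, hlist]

lemma conj_L2 {p q : List (Fin 3)} (hp : Red p) (hq : Red q) (hpp : Pal p) (hpq : Pal q)
    (hpne : p ≠ []) (hqne : q ≠ []) (hj : p.getLast? ≠ q.head?) :
    wp p * wp q * wp p = wp (p ++ q ++ p) ∧ Red (p ++ q ++ p) ∧ Pal (p ++ q ++ p) := by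
  have hj' : q.getLast? ≠ p.head? := by
    rw [pal_getLast? hpq, ← pal_getLast? hpp]
    intro h
    exact hj h.symm
  refine ⟨by rw [wp_append, wp_append], ?_, ?_⟩
  · rw [List.append_assoc]
    refine red_append_of _ _ hp ?_ ?_
    · refine red_append_of _ _ hq hp ?_
      intro x y hx hy h
      exact hj' (by rw [hx, hy, h])
    · intro x y hx hy h
      rw [List.head?_append_of_ne_nil q hqne] at hy
      exact hj (by rw [hx, hy, h])
  · show (p ++ q ++ p).reverse = p ++ q ++ p
    rw [List.reverse_append, List.reverse_append, hpp, hpq, List.append_assoc]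


/-! ### small list helpers -/

lemma ne_nil_len3 {l : List (Fin 3)} (h : 3 ≤ l.length) : l ≠ [] := by
  intro he; subst he; simp at h

lemma prefix_head? {l m : List (Fin 3)} (h : l <+: m) (hne : l ≠ []) :
    m.head? = l.head? := by
  obtain ⟨r, rfl⟩ := h
  exact List.head?_append_of_ne_nil l hne

lemma prefix_take3 {l m : List (Fin 3)} (h : l <+: m) (hlen : 3 ≤ l.length) :
    m.take 3 = l.take 3 := by
  obtain ⟨r, rfl⟩ := h
  exact List.take_append_of_le_length hlen

lemma head_of_take3 {l : List (Fin 3)} {a b c' : Fin 3} (h : l.take 3 = [a, b, c']) :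
    l.head? = some a := by
  cases l with
  | nil => simp at h
  | cons x r =>
    have : x = a := by
      have := congrArg (fun l => l.head?) h
      simpa using this
    simp [this]

lemma eq_cons_of_head? {l : List (Fin 3)} {a : Fin 3} (h : l.head? = some a) :
    l = a :: l.tail :=
  (List.cons_head?_tail (Option.mem_def.mpr h)).symm

lemma short_pal {l : List (Fin 3)} (hr : Red l) (hp : Pal l) (hne : l ≠ [])
    (hlen : l.length < 3) : ∃ a, l = [a] := by
  match l, hr, hp, hne, hlen with
  | [a], _, _, _, _ => exact ⟨a, rfl⟩
  | [a, b], hr, hp, _, _ =>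
    exfalso
    have hab : b = a ∧ a = b := by simpa [Pal] using hp
    have : a ≠ b := by simpa [Red, List.isChain_cons_cons] using hr
    exact this hab.2

/-! ### invariants -/

structure InvM (lx ly : List (Fin 3)) : Prop where
  redy : Red ly
  paly : Pal ly
  heady : ly.head? = some 1
  leny : 3 ≤ ly.length
  hx : lx = [0] ∨ (Red lx ∧ Pal lx ∧ lx <+: ly ∧ lx ≠ [] ∧ 3 ≤ lx.length)

structure InvF (lx ly lz : List (Fin 3)) : Prop where
  redy : Red ly
  paly : Pal ly
  heady : ly.head? = some 1
  leny : 3 ≤ ly.length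
  redz : Red lz
  palz : Pal lz
  prez : lz <+: ly
  nez : lz ≠ []
  lenz : 3 ≤ lz.length
  hx : lx = [0] ∨ (Red lx ∧ Pal lx ∧ lx <+: ly ∧ lx ≠ [] ∧ 3 ≤ lx.length)

structure InvB (lx ly lz : List (Fin 3)) : Prop where
  redx : Red lx
  palx : Pal lx
  nex : lx ≠ []
  headx : lx.head? = some 0
  tx : lx.take 3 ≠ [0, 1, 2]
  redz : Red lz
  palz : Pal lz
  nez : lz ≠ []
  headz : lz.head? = some 2
  tz : lz.take 3 ≠ [2, 1, 0]
  redy : Red ly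
  paly : Pal ly
  ney : ly ≠ []
  hy : ly <+: lx ∨ ly <+: lz

lemma app_ne {l m : List (Fin 3)} (h : l ≠ []) : l ++ m ≠ [] := fun he =>
  h (List.append_eq_nil_iff.mp he).1

lemma invM_base : InvM [0] [1, 2, 1] :=
  ⟨by simp [Red, List.isChain_cons_cons], rfl, rfl, by simp, Or.inl rfl⟩

lemma invB_baseR : InvB [0] [2] [2, 1, 2] :=
  ⟨List.isChain_singleton _, rfl, by simp, rfl, by simp,
   by simp [Red, List.isChain_cons_cons], rfl, by simp, rfl, by simp,
   List.isChain_singleton _, rfl, by simp, Or.inr (by simp)⟩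

lemma invB_baseL : InvB [0, 1, 0] [0] [2] :=
  ⟨by simp [Red, List.isChain_cons_cons], rfl, by simp, rfl, by simp,
   List.isChain_singleton _, rfl, by simp, rfl, by simp,
   List.isChain_singleton _, rfl, by simp, Or.inl (by simp)⟩

/-! ### step lemmas -/

lemma stepM {lx ly : List (Fin 3)} (h : InvM lx ly) :
    ∃ ly', wp ly * wp lx * wp ly = wp ly' ∧ InvM ly ly' := by
  have hyne : ly ≠ [] := ne_nil_len3 h.leny
  rcases h.hx with rfl | ⟨redx, palx, pre, nex, lenx⟩
  · have hj : ly.getLast? ≠ ([0] : List (Fin 3)).head? := by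
      rw [pal_getLast? h.paly, h.heady]; decide
    obtain ⟨e, r, p⟩ := conj_L2 (q := [0]) h.redy (List.isChain_singleton _) h.paly rfl hyne (by simp) hj
    refine ⟨_, e, ⟨r, p, ?_, ?_, Or.inr ⟨h.redy, h.paly, ?_, hyne, h.leny⟩⟩⟩
    · rw [List.append_assoc, List.head?_append_of_ne_nil ly hyne, h.heady]
    · have hh := h.leny; simp only [List.length_append] at hh ⊢; omega
    · rw [List.append_assoc]; exact List.prefix_append _ _
  · obtain ⟨s, rfl⟩ := pre
    obtain ⟨e, r, p⟩ := conj_L1 h.redy h.paly palx nex rfl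
    refine ⟨_, e, ⟨r, p, ?_, ?_, Or.inr ⟨h.redy, h.paly, List.prefix_append _ _, hyne, h.leny⟩⟩⟩
    · rw [List.head?_append_of_ne_nil _ hyne]; exact h.heady
    · have hh := h.leny; simp only [List.length_append] at hh ⊢; omega

lemma stepMF {lx ly : List (Fin 3)} (h : InvM lx ly) :
    ∃ ly', wp ly * wp [1] * wp ly = wp ly' ∧ InvF lx ly' ly := by
  have hyne : ly ≠ [] := ne_nil_len3 h.leny
  have hdec : ly = [1] ++ ly.tail := eq_cons_of_head? h.heady
  obtain ⟨e, r, p⟩ := conj_L1 (q := [1]) h.redy h.paly rfl (by simp) hdec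
  refine ⟨_, e, ⟨r, p, ?_, ?_, h.redy, h.paly, List.prefix_append _ _, hyne, h.leny, ?_⟩⟩
  · rw [List.head?_append_of_ne_nil _ hyne]; exact h.heady
  · have hh := h.leny; simp only [List.length_append] at hh ⊢; omega
  · rcases h.hx with rfl | ⟨redx, palx, pre, nex, lenx⟩
    · exact Or.inl rfl
    · exact Or.inr ⟨redx, palx, pre.trans (List.prefix_append _ _), nex, lenx⟩

lemma stepFR {lx ly lz : List (Fin 3)} (h : InvF lx ly lz) :
    ∃ ly', wp ly * wp lz * wp ly = wp ly' ∧ InvF lx ly' ly := by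
  have hyne : ly ≠ [] := ne_nil_len3 h.leny
  obtain ⟨s, rfl⟩ := h.prez
  obtain ⟨e, r, p⟩ := conj_L1 h.redy h.paly h.palz h.nez rfl
  refine ⟨_, e, ⟨r, p, ?_, ?_, h.redy, h.paly, List.prefix_append _ _, hyne, h.leny, ?_⟩⟩
  · rw [List.head?_append_of_ne_nil _ hyne]; exact h.heady
  · have hh := h.leny; simp only [List.length_append] at hh ⊢; omega
  · rcases h.hx with rfl | ⟨redx, palx, pre, nex, lenx⟩
    · exact Or.inl rfl
    · exact Or.inr ⟨redx, palx, pre.trans (List.prefix_append _ _), nex, lenx⟩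

lemma stepFL {lx ly lz : List (Fin 3)} (h : InvF lx ly lz) :
    ∃ ly', wp ly * wp lx * wp ly = wp ly' ∧ InvF ly ly' lz := by
  have hyne : ly ≠ [] := ne_nil_len3 h.leny
  rcases h.hx with rfl | ⟨redx, palx, pre, nex, lenx⟩
  · have hj : ly.getLast? ≠ ([0] : List (Fin 3)).head? := by
      rw [pal_getLast? h.paly, h.heady]; decide
    obtain ⟨e, r, p⟩ := conj_L2 (q := [0]) h.redy (List.isChain_singleton _) h.paly rfl hyne (by simp) hj
    refine ⟨_, e, ⟨r, p, ?_, ?_, h.redz, h.palz,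
      h.prez.trans (by rw [List.append_assoc]; exact List.prefix_append _ _), h.nez, h.lenz,
      Or.inr ⟨h.redy, h.paly, by rw [List.append_assoc]; exact List.prefix_append _ _,
        hyne, h.leny⟩⟩⟩
    · rw [List.append_assoc, List.head?_append_of_ne_nil ly hyne, h.heady]
    · have hh := h.leny; simp only [List.length_append] at hh ⊢; omega
  · obtain ⟨s, rfl⟩ := pre
    obtain ⟨e, r, p⟩ := conj_L1 h.redy h.paly palx nex rfl
    refine ⟨_, e, ⟨r, p, ?_, ?_, h.redz, h.palz,
      h.prez.trans (List.prefix_append _ _), h.nez, h.lenz,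
      Or.inr ⟨h.redy, h.paly, List.prefix_append _ _, hyne, h.leny⟩⟩⟩
    · rw [List.head?_append_of_ne_nil _ hyne]; exact h.heady
    · have hh := h.leny; simp only [List.length_append] at hh ⊢; omega

lemma stepBR {lx ly lz : List (Fin 3)} (h : InvB lx ly lz) :
    ∃ lz', wp lz * wp ly * wp lz = wp lz' ∧ InvB lx lz lz' := by
  rcases h.hy with pre | pre
  · -- y prefix of x : no-cancellation conjugation z y z
    have hheady : ly.head? = some 0 := by
      rw [← prefix_head? pre h.ney]; exact h.headx
    have hj : lz.getLast? ≠ ly.head? := by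
      rw [pal_getLast? h.palz, h.headz, hheady]; decide
    obtain ⟨e, r, p⟩ := conj_L2 h.redz h.redy h.palz h.paly h.nez h.ney hj
    refine ⟨_, e, ⟨h.redx, h.palx, h.nex, h.headx, h.tx, r, p, ?_, ?_, ?_,
      h.redz, h.palz, h.nez, Or.inr (by rw [List.append_assoc]; exact List.prefix_append _ _)⟩⟩
    · exact app_ne (app_ne h.nez)
    · rw [List.append_assoc, List.head?_append_of_ne_nil lz h.nez]; exact h.headz
    · rcases Nat.lt_or_ge lz.length 3 with hlen | hlen
      · obtain ⟨a, rfl⟩ := short_pal h.redz h.palz h.nez hlen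
        have ha : a = 2 := by simpa using h.headz
        subst ha
        rw [eq_cons_of_head? hheady]
        intro hcon
        simp [List.take] at hcon
      · rw [List.append_assoc, List.take_append_of_le_length hlen]
        exact h.tz
  · -- y prefix of z : L1
    obtain ⟨s, rfl⟩ := pre
    obtain ⟨e, r, p⟩ := conj_L1 h.redz h.palz h.paly h.ney rfl
    refine ⟨_, e, ⟨h.redx, h.palx, h.nex, h.headx, h.tx, r, p, ?_, ?_, ?_,
      h.redz, h.palz, h.nez, Or.inr (List.prefix_append _ _)⟩⟩
    · exact app_ne h.nez
    · rw [List.head?_append_of_ne_nil _ h.nez]; exact h.headz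
    · rcases Nat.lt_or_ge (ly ++ s).length 3 with hlen | hlen
      · have hs : s = [] := by
          have h1 : ly.length + s.length < 3 := by
            simpa [List.length_append] using hlen
          have h2 : ly.length ≠ 0 := by simpa [List.length_eq_zero_iff] using h.ney
          have h3 : (ly ++ s).reverse = ly ++ s := h.palz
          rcases short_pal h.redz h.palz h.nez hlen with ⟨a, he⟩
          have h4 := congrArg List.length he
          simp only [List.length_append, List.length_cons, List.length_nil] at h4
          exact List.length_eq_zero_iff.mp (by omega)
        subst hs
        simpa using h.tz
      · rw [List.take_append_of_le_length hlen]
        exact h.tz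

lemma stepBL {lx ly lz : List (Fin 3)} (h : InvB lx ly lz) :
    ∃ lx', wp lx * wp ly * wp lx = wp lx' ∧ InvB lx' lx lz := by
  rcases h.hy with pre | pre
  · -- y prefix of x : L1
    obtain ⟨s, rfl⟩ := pre
    obtain ⟨e, r, p⟩ := conj_L1 h.redx h.palx h.paly h.ney rfl
    refine ⟨_, e, ⟨r, p, ?_, ?_, ?_, h.redz, h.palz, h.nez, h.headz, h.tz,
      h.redx, h.palx, h.nex, Or.inl (List.prefix_append _ _)⟩⟩
    · exact app_ne h.nex
    · rw [List.head?_append_of_ne_nil _ h.nex]; exact h.headx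
    · rcases Nat.lt_or_ge (ly ++ s).length 3 with hlen | hlen
      · have hs : s = [] := by
          have h2 : ly.length ≠ 0 := by simpa [List.length_eq_zero_iff] using h.ney
          rcases short_pal h.redx h.palx h.nex hlen with ⟨a, he⟩
          have h4 := congrArg List.length he
          simp only [List.length_append, List.length_cons, List.length_nil] at h4
          exact List.length_eq_zero_iff.mp (by omega)
        subst hs
        simpa using h.tx
      · rw [List.take_append_of_le_length hlen]
        exact h.tx
  · -- y prefix of z : L2
    have hheady : ly.head? = some 2 := by
      rw [← prefix_head? pre h.ney]; exact h.headz
    have hj : lx.getLast? ≠ ly.head? := by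
      rw [pal_getLast? h.palx, h.headx, hheady]; decide
    obtain ⟨e, r, p⟩ := conj_L2 h.redx h.redy h.palx h.paly h.nex h.ney hj
    refine ⟨_, e, ⟨r, p, ?_, ?_, ?_, h.redz, h.palz, h.nez, h.headz, h.tz,
      h.redx, h.palx, h.nex, Or.inl (by rw [List.append_assoc]; exact List.prefix_append _ _)⟩⟩
    · exact app_ne (app_ne h.nex)
    · rw [List.append_assoc, List.head?_append_of_ne_nil lx h.nex]; exact h.headx
    · rcases Nat.lt_or_ge lx.length 3 with hlen | hlen
      · obtain ⟨a, rfl⟩ := short_pal h.redx h.palx h.nex hlen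
        have ha : a = 0 := by simpa using h.headx
        subst ha
        rw [eq_cons_of_head? hheady]
        intro hcon
        simp [List.take] at hcon
      · rw [List.append_assoc, List.take_append_of_le_length hlen]
        exact h.tx


/-! ### the target words -/

lemma A_eq : A = wp [0] := by simp [wp, A]; rfl
lemma B_eq : B = wp [1] := by simp [wp, B]; rfl
lemma C_eq : C = wp [2] := by simp [wp, C]; rfl
lemma D_eq : D = wp [2, 1, 0] := by
  simp [wp, D, A, B, C, gen, mul_assoc]
lemma Dinv_eq : D⁻¹ = wp [0, 1, 2] := by
  rw [D_eq, ← wp_reverse]; rfl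

def wpos : ℕ → List (Fin 3)
  | 0 => [1]
  | j + 1 => [2, 1, 0] ++ wpos j ++ [0, 1, 2]

def wneg : ℕ → List (Fin 3)
  | 0 => [1]
  | j + 1 => [0, 1, 2] ++ wneg j ++ [2, 1, 0]

lemma wpos_spec (j : ℕ) : Red (wpos j) ∧ (wpos j).length = 6 * j + 1 ∧
    (wpos j).head? = some (if j = 0 then 1 else 2) ∧
    (wpos j).getLast? = some (if j = 0 then 1 else 2) := by
  induction j with
  | zero => exact ⟨List.isChain_singleton _, rfl, rfl, rfl⟩
  | succ j ih =>
    obtain ⟨hred, hlen, hhd, hlast⟩ := ih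
    have hne : wpos j ≠ [] := by
      intro he; rw [he] at hhd; simp at hhd
    constructor
    · show Red ([2, 1, 0] ++ (wpos j ++ [0, 1, 2]))
      refine red_append_of _ _ (by simp [Red, List.isChain_cons_cons]) ?_ ?_
      · refine red_append_of _ _ hred (by simp [Red, List.isChain_cons_cons]) ?_
        intro x y hx hy
        rw [hlast] at hx
        cases hx
        simp only [List.head?] at hy
        cases hy
        split <;> simp
      · intro x y hx hy
        simp only [List.getLast?] at hx
        cases hx
        rw [List.head?_append_of_ne_nil _ hne, hhd] at hy
        cases hy
        split <;> simp
    refine ⟨?_, ?_, ?_⟩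
    · show ([2, 1, 0] ++ wpos j ++ [0, 1, 2]).length = _
      simp only [List.length_append, hlen, List.length_cons, List.length_nil]
      omega
    · show ([2, 1, 0] ++ wpos j ++ [0, 1, 2]).head? = _
      simp
    · show ([2, 1, 0] ++ wpos j ++ [0, 1, 2]).getLast? = _
      rw [List.getLast?_append_of_ne_nil _ (by simp : ([0,1,2] : List (Fin 3)) ≠ [])]
      simp

lemma wneg_spec (j : ℕ) : Red (wneg j) ∧ (wneg j).length = 6 * j + 1 ∧
    (wneg j).head? = some (if j = 0 then 1 else 0) ∧
    (wneg j).getLast? = some (if j = 0 then 1 else 0) := by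
  induction j with
  | zero => exact ⟨List.isChain_singleton _, rfl, rfl, rfl⟩
  | succ j ih =>
    obtain ⟨hred, hlen, hhd, hlast⟩ := ih
    have hne : wneg j ≠ [] := by
      intro he; rw [he] at hhd; simp at hhd
    constructor
    · show Red ([0, 1, 2] ++ (wneg j ++ [2, 1, 0]))
      refine red_append_of _ _ (by simp [Red, List.isChain_cons_cons]) ?_ ?_
      · refine red_append_of _ _ hred (by simp [Red, List.isChain_cons_cons]) ?_
        intro x y hx hy
        rw [hlast] at hx
        cases hx
        simp only [List.head?] at hy
        cases hy
        split <;> simp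
      · intro x y hx hy
        simp only [List.getLast?] at hx
        cases hx
        rw [List.head?_append_of_ne_nil _ hne, hhd] at hy
        cases hy
        split <;> simp
    refine ⟨?_, ?_, ?_⟩
    · show ([0, 1, 2] ++ wneg j ++ [2, 1, 0]).length = _
      simp only [List.length_append, hlen, List.length_cons, List.length_nil]
      omega
    · show ([0, 1, 2] ++ wneg j ++ [2, 1, 0]).head? = _
      simp
    · show ([0, 1, 2] ++ wneg j ++ [2, 1, 0]).getLast? = _
      rw [List.getLast?_append_of_ne_nil _ (by simp : ([2,1,0] : List (Fin 3)) ≠ [])]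
      simp

lemma target_pos (j : ℕ) : D ^ (j : ℤ) * B * (D ^ (j : ℤ))⁻¹ = wp (wpos j) := by
  induction j with
  | zero => simpa [wpos, wneg] using B_eq
  | succ j ih =>
    have hz : ((j + 1 : ℕ) : ℤ) = (j : ℤ) + 1 := by push_cast; ring
    have hDp : D ^ ((j + 1 : ℕ) : ℤ) = D * D ^ (j : ℤ) := by
      rw [hz, add_comm, zpow_add, zpow_one]
    rw [hDp]
    have : D * D ^ (j : ℤ) * B * (D * D ^ (j : ℤ))⁻¹
        = D * (D ^ (j : ℤ) * B * (D ^ (j : ℤ))⁻¹) * D⁻¹ := by group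
    rw [this, ih, Dinv_eq, D_eq, ← wp_append, ← wp_append]
    rfl

lemma target_neg (j : ℕ) : D ^ (-(j : ℤ)) * B * (D ^ (-(j : ℤ)))⁻¹ = wp (wneg j) := by
  induction j with
  | zero => simpa [wpos, wneg] using B_eq
  | succ j ih =>
    have hz : (-((j + 1 : ℕ) : ℤ)) = -(j : ℤ) + (-1) := by push_cast; ring
    have hDp : D ^ (-((j + 1 : ℕ) : ℤ)) = D⁻¹ * D ^ (-(j : ℤ)) := by
      rw [hz, add_comm, zpow_add, zpow_neg_one]
    rw [hDp]
    have : D⁻¹ * D ^ (-(j : ℤ)) * B * (D⁻¹ * D ^ (-(j : ℤ)))⁻¹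
        = D⁻¹ * (D ^ (-(j : ℤ)) * B * (D ^ (-(j : ℤ)))⁻¹) * D := by group
    rw [this, ih, Dinv_eq, D_eq, ← wp_append, ← wp_append]
    rfl

/-- classification of the target words -/
lemma target_cases {t : ℤ} {l : List (Fin 3)} (hred : Red l)
    (h : wp l = D ^ t * B * (D ^ t)⁻¹) :
    (t = 0 ∧ l = [1]) ∨ (l.take 3 = [2, 1, 0] ∧ l.head? = some 2 ∧ 7 ≤ l.length) ∨
      (l.take 3 = [0, 1, 2] ∧ l.head? = some 0 ∧ 7 ≤ l.length) := by
  rcases le_or_gt 0 t with ht | ht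
  · obtain ⟨j, rfl⟩ := Int.eq_ofNat_of_zero_le ht
    have hl : l = wpos j := wp_inj hred (wpos_spec j).1 (h.trans (target_pos j))
    cases j with
    | zero => exact Or.inl ⟨rfl, hl⟩
    | succ j =>
      refine Or.inr (Or.inl ⟨?_, ?_, ?_⟩)
      · rw [hl]
        show List.take 3 ([2, 1, 0] ++ (wpos j ++ [0, 1, 2])) = _
        rfl
      · rw [hl]; exact ((wpos_spec (j + 1)).2.2.1).trans (by simp)
      · rw [hl, (wpos_spec (j + 1)).2.1]; omega
  · obtain ⟨j, hj⟩ : ∃ j : ℕ, t = -(j : ℤ) := ⟨t.natAbs, by omega⟩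
    subst hj
    have hl : l = wneg j := wp_inj hred (wneg_spec j).1 (h.trans (target_neg j))
    cases j with
    | zero => simp at ht
    | succ j =>
      refine Or.inr (Or.inr ⟨?_, ?_, ?_⟩)
      · rw [hl]
        show List.take 3 ([0, 1, 2] ++ (wneg j ++ [2, 1, 0])) = _
        rfl
      · rw [hl]; exact ((wneg_spec (j + 1)).2.2.1).trans (by simp)
      · rw [hl, (wneg_spec (j + 1)).2.1]; omega

end Stmt15

open Stmt15

/-- If f_n = R then P_{2m,n} = P_{2m+1,n₊}, and Q_{m',n'} equals this element exactly
for (m',n') in {(3m+1,n)} ∪ {(3m+2,k) | n+1 ≤ k ≤ n₊}. -/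
theorem stmt15
    (R L : MulAut G)
    (hRA : R A = A) (hRB : R B = B * C * B⁻¹) (hRC : R C = B)
    (hLA : L A = B) (hLB : L B = B * A * B⁻¹) (hLC : L C = C)
    (P : ℤ → G)
    (hP0 : ∀ m : ℤ, P (3 * m) = D ^ m * A * (D ^ m)⁻¹)
    (hP1 : ∀ m : ℤ, P (3 * m + 1) = D ^ m * B * (D ^ m)⁻¹)
    (hP2 : ∀ m : ℤ, P (3 * m + 2) = D ^ m * C * (D ^ m)⁻¹)
    (p : ℤ) (hp : 2 ≤ p)
    (f : ℤ → MulAut G) (hfRL : ∀ n : ℤ, f n = R ∨ f n = L)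
    (hfper : ∀ n : ℤ, f (n + p) = f n) (hf0 : f 0 = L) (hf1 : f 1 = R)
    (F : ℤ → MulAut G) (hF0 : F 0 = 1) (hF : ∀ n : ℤ, F n = F (n - 1) * f n)
    (Q : ℤ → ℤ → G) (hQ : ∀ m n : ℤ, Q m n = F (n - 1) (P m))
    (PP : ℤ → ℤ → G)
    (hPPe : ∀ m n : ℤ, PP (2 * m) n = D ^ m * F (n - 1) B * (D ^ m)⁻¹)
    (hPPo : ∀ m n : ℤ, PP (2 * m + 1) n = D ^ m * F n (C * B * C⁻¹) * (D ^ m)⁻¹)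
    (np : ℤ → ℤ) (hnp : ∀ n : ℤ, IsLeast {k : ℤ | n < k ∧ f k = f n} (np n)) :
    ∀ m n : ℤ, f n = R →
      PP (2 * m) n = PP (2 * m + 1) (np n) ∧
      ∀ m' n' : ℤ, Q m' n' = PP (2 * m) n ↔
        ((m' = 3 * m + 1 ∧ n' = n) ∨ (m' = 3 * m + 2 ∧ n + 1 ≤ n' ∧ n' ≤ np n)) := by
  -- basic relations
  have Bsq : B * B = 1 := gen_mul_self 1
  have Ainv : A⁻¹ = A := gen_inv 0
  have Binv : B⁻¹ = B := gen_inv 1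
  have Cinv : C⁻¹ = C := gen_inv 2
  have hBCB : B * C * B⁻¹ = wp [1, 2, 1] := by
    rw [Binv, show ([1,2,1] : List (Fin 3)) = [1] ++ [2] ++ [1] from rfl,
      wp_append, wp_append, ← B_eq, ← C_eq]
  have hBAB : B * A * B⁻¹ = wp [1, 0, 1] := by
    rw [Binv, show ([1,0,1] : List (Fin 3)) = [1] ++ [0] ++ [1] from rfl,
      wp_append, wp_append, ← B_eq, ← A_eq]
  have hCBC : C * B * C⁻¹ = wp [2, 1, 2] := by
    rw [Cinv, show ([2,1,2] : List (Fin 3)) = [2] ++ [1] ++ [2] from rfl,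
      wp_append, wp_append, ← B_eq, ← C_eq]
  have hABA : A * B * A⁻¹ = wp [0, 1, 0] := by
    rw [Ainv, show ([0,1,0] : List (Fin 3)) = [0] ++ [1] ++ [0] from rfl,
      wp_append, wp_append, ← B_eq, ← A_eq]
  -- automorphism facts
  have hRD : R D = D := by
    rw [D, map_mul, map_mul, hRA, hRB, hRC, Binv,
      show B * (B * C * B) * A = (B * B) * (C * (B * A)) from by group, Bsq, one_mul, mul_assoc]
  have hLD : L D = D := by
    rw [D, map_mul, map_mul, hLA, hLB, hLC]
    group
  have hRCBC : R (C * B * C⁻¹) = C := by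
    rw [map_mul, map_mul, map_inv, hRC, hRB, Binv,
      show B * (B * C * B) * B = (B * B) * C * (B * B) from by group, Bsq]
    simp
  have hLABA : L (A * B * A⁻¹) = A := by
    rw [map_mul, map_mul, map_inv, hLA, hLB, Binv,
      show B * (B * A * B) * B = (B * B) * A * (B * B) from by group, Bsq]
    simp
  have hinv : ∀ (σ : MulAut G) (x y : G), σ x = y → σ⁻¹ y = x := by
    intro σ x y h
    rw [← h, MulAut.inv_def]
    exact σ.symm_apply_apply x
  have hRiA : R⁻¹ A = A := hinv R A A hRA
  have hRiB : R⁻¹ B = C := hinv R C B hRC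
  have hRiC : R⁻¹ C = C * B * C⁻¹ := hinv R (C * B * C⁻¹) C hRCBC
  have hLiA : L⁻¹ A = A * B * A⁻¹ := hinv L (A * B * A⁻¹) A hLABA
  have hLiB : L⁻¹ B = A := hinv L A B hLA
  have hLiC : L⁻¹ C = C := hinv L C C hLC
  have hFD : ∀ k : ℤ, F k D = D := by
    intro k
    induction k using Int.induction_on with
    | zero => rw [hF0]; rfl
    | succ i ih =>
      have hstep := hF ((i : ℤ) + 1)
      rw [show (i : ℤ) + 1 - 1 = (i : ℤ) from by ring] at hstep
      rw [hstep, MulAut.mul_apply]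
      rcases hfRL ((i : ℤ) + 1) with h | h <;> rw [h]
      · rw [hRD]; exact ih
      · rw [hLD]; exact ih
    | pred i ih =>
      have hstep := hF (-(i : ℤ))
      rw [show -(i : ℤ) - 1 = -(i : ℤ) - 1 from rfl] at hstep
      have h2 : F (-(i : ℤ) - 1) (f (-(i : ℤ)) D) = D := by
        rw [← MulAut.mul_apply, ← hstep]; exact ih
      rcases hfRL (-(i : ℤ)) with h | h <;> rw [h] at h2
      · rwa [hRD] at h2
      · rwa [hLD] at h2
  have hFDz : ∀ (k t : ℤ), F k (D ^ t) = D ^ t := by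
    intro k t; rw [map_zpow, hFD]
  have hexp : ∀ (kk u : ℤ) (X : G), F kk (D ^ u * X * (D ^ u)⁻¹) = D ^ u * F kk X * (D ^ u)⁻¹ := by
    intro kk u X
    rw [map_mul, map_mul, map_inv, hFDz]
  intro m n hfnR
  obtain ⟨⟨hnlt, hnpf⟩, hmin⟩ := hnp n
  rw [hfnR] at hnpf
  have hmid : ∀ k : ℤ, n < k → k < np n → f k = L := by
    intro k h1 h2
    rcases hfRL k with h | h
    · exfalso
      have := hmin (Set.mem_setOf.mpr ⟨h1, by rw [h, hfnR]⟩)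
      omega
    · exact h
  -- Region 2 : n ≤ k ≤ np n - 1
  have REG2 : ∀ k : ℤ, n ≤ k → k ≤ np n - 1 →
      F k C = F (n-1) B ∧ ∃ lx ly, F k A = F (n-1) (wp lx) ∧ F k B = F (n-1) (wp ly) ∧
        InvM lx ly := by
    refine Int.le_induction ?_ ?_
    · intro _
      have happ : ∀ x : G, F n x = F (n-1) (R x) := by
        intro x; rw [hF n, MulAut.mul_apply, hfnR]
      refine ⟨by rw [happ, hRC], [0], [1,2,1], ?_, ?_, invM_base⟩
      · rw [happ, hRA, ← A_eq]
      · rw [happ, hRB, hBCB]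
    · intro k hk ih hle
      obtain ⟨hC2, lx, ly, hA2, hB2, hi⟩ := ih (by omega)
      have hfL : f (k+1) = L := hmid (k+1) (by omega) (by omega)
      have happ : ∀ x : G, F (k+1) x = F k (L x) := by
        intro x
        rw [hF (k+1), show k + 1 - 1 = k from by ring, MulAut.mul_apply, hfL]
      obtain ⟨ly', e, hi'⟩ := stepM hi
      refine ⟨by rw [happ, hLC]; exact hC2, ly, ly', ?_, ?_, hi'⟩
      · rw [happ, hLA]; exact hB2
      · rw [happ, hLB, hBAB]
        rw [show (wp [1,0,1] : G) = B * A * B⁻¹ from hBAB.symm, map_mul, map_mul, map_inv,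
          hA2, hB2, ← map_inv, ← map_mul, ← map_mul, wp_pal_inv hi.paly, e]
  -- Region 1 : np n ≤ k
  have REG1 : ∀ k : ℤ, np n ≤ k →
      ∃ lx ly lz, F k A = F (n-1) (wp lx) ∧ F k B = F (n-1) (wp ly) ∧
        F k C = F (n-1) (wp lz) ∧ InvF lx ly lz := by
    refine Int.le_induction ?_ ?_
    · obtain ⟨hC2, lx, ly, hA2, hB2, hi⟩ := REG2 (np n - 1) (by omega) (by omega)
      have happ : ∀ x : G, F (np n) x = F (np n - 1) (R x) := by
        intro x; rw [hF (np n), MulAut.mul_apply, hnpf]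
      obtain ⟨ly', e, hi'⟩ := stepMF hi
      refine ⟨lx, ly', ly, ?_, ?_, ?_, hi'⟩
      · rw [happ, hRA]; exact hA2
      · rw [happ, hRB, map_mul, map_mul, map_inv, hB2, hC2, B_eq, ← map_inv, ← map_mul,
          ← map_mul, wp_pal_inv hi.paly, e]
      · rw [happ, hRC]; exact hB2
    · intro k hk ih
      obtain ⟨lx, ly, lz, hA2, hB2, hC2, hi⟩ := ih
      rcases hfRL (k+1) with hfk | hfk
      · have happ : ∀ x : G, F (k+1) x = F k (R x) := by
          intro x
          rw [hF (k+1), show k + 1 - 1 = k from by ring, MulAut.mul_apply, hfk]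
        obtain ⟨ly', e, hi'⟩ := stepFR hi
        refine ⟨lx, ly', ly, ?_, ?_, ?_, hi'⟩
        · rw [happ, hRA]; exact hA2
        · rw [happ, hRB, map_mul, map_mul, map_inv, hB2, hC2, ← map_inv, ← map_mul,
            ← map_mul, wp_pal_inv hi.paly, e]
        · rw [happ, hRC]; exact hB2
      · have happ : ∀ x : G, F (k+1) x = F k (L x) := by
          intro x
          rw [hF (k+1), show k + 1 - 1 = k from by ring, MulAut.mul_apply, hfk]
        obtain ⟨ly', e, hi'⟩ := stepFL hi
        refine ⟨ly, ly', lz, ?_, ?_, ?_, hi'⟩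
        · rw [happ, hLA]; exact hB2
        · rw [happ, hLB, map_mul, map_mul, map_inv, hB2, hA2, ← map_inv, ← map_mul,
            ← map_mul, wp_pal_inv hi.paly, e]
        · rw [happ, hLC]; exact hC2
  -- Region 3 : k ≤ n - 2
  have REG3 : ∀ k : ℤ, k ≤ n - 2 →
      ∃ lx ly lz, F k A = F (n-1) (wp lx) ∧ F k B = F (n-1) (wp ly) ∧
        F k C = F (n-1) (wp lz) ∧ InvB lx ly lz := by
    have hdown : ∀ k : ℤ, (∀ x : G, F (k-1) x = F k ((f k)⁻¹ x)) := by
      intro k x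
      rw [hF k, MulAut.mul_apply]
      congr 1
      rw [MulAut.inv_def]
      exact ((f k).apply_symm_apply x).symm
    refine Int.le_induction_down ?_ ?_
    · have hbase : ∀ x : G, F (n-2) x = F (n-1) ((f (n-1))⁻¹ x) := by
        intro x
        have := hdown (n-1) x
        rw [show n - 1 - 1 = n - 2 from by ring] at this
        exact this
      rcases hfRL (n-1) with hf1' | hf1'
      · refine ⟨[0], [2], [2,1,2], ?_, ?_, ?_, invB_baseR⟩
        · rw [hbase, hf1', hRiA, ← A_eq]
        · rw [hbase, hf1', hRiB, ← C_eq]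
        · rw [hbase, hf1', hRiC, hCBC]
      · refine ⟨[0,1,0], [0], [2], ?_, ?_, ?_, invB_baseL⟩
        · rw [hbase, hf1', hLiA, hABA]
        · rw [hbase, hf1', hLiB, ← A_eq]
        · rw [hbase, hf1', hLiC, ← C_eq]
    · intro k hk ih
      obtain ⟨lx, ly, lz, hA2, hB2, hC2, hi⟩ := ih
      rcases hfRL k with hfk | hfk
      · obtain ⟨lz', e, hi'⟩ := stepBR hi
        refine ⟨lx, lz, lz', ?_, ?_, ?_, hi'⟩
        · rw [hdown k, hfk, hRiA]; exact hA2
        · rw [hdown k, hfk, hRiB]; exact hC2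
        · rw [hdown k, hfk, hRiC, map_mul, map_mul, map_inv, hC2, hB2, ← map_inv,
            ← map_mul, ← map_mul, wp_pal_inv hi.palz, e]
      · obtain ⟨lx', e, hi'⟩ := stepBL hi
        refine ⟨lx', lx, lz, ?_, ?_, ?_, hi'⟩
        · rw [hdown k, hfk, hLiA, map_mul, map_mul, map_inv, hA2, hB2, ← map_inv,
            ← map_mul, ← map_mul, wp_pal_inv hi.palx, e]
        · rw [hdown k, hfk, hLiB]; exact hA2
        · rw [hdown k, hfk, hLiC]; exact hC2
  constructor
  · -- part 1
    rw [hPPe, hPPo]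
    have h1 : F (np n) (C * B * C⁻¹) = F (np n - 1) (R (C * B * C⁻¹)) := by
      rw [hF (np n), MulAut.mul_apply, hnpf]
    rw [h1, hRCBC, (REG2 (np n - 1) (by omega) (by omega)).1]
  · intro m' n'
    constructor
    · intro hq
      rw [hQ, hPPe] at hq
      have hsolve : ∀ l : List (Fin 3), Red l →
          F (n-1) (wp l) = F (n-1) (D ^ (m - m'/3) * B * (D ^ (m - m'/3))⁻¹) →
          ((m - m'/3) = 0 ∧ l = [1]) ∨
            (l.take 3 = [2,1,0] ∧ l.head? = some 2 ∧ 7 ≤ l.length) ∨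
            (l.take 3 = [0,1,2] ∧ l.head? = some 0 ∧ 7 ≤ l.length) := by
        intro l hred h
        exact target_cases hred ((F (n-1)).injective h)
      have kill1 : ∀ l : List (Fin 3), Red l → l.head? = some 1 → 3 ≤ l.length →
          F (n-1) (wp l) = F (n-1) (D ^ (m - m'/3) * B * (D ^ (m - m'/3))⁻¹) → False := by
        intro l hred hh hlen h
        rcases hsolve l hred h with ⟨_, rfl⟩ | ⟨_, hh2, _⟩ | ⟨_, hh2, _⟩
        · simp at hlen
        · rw [hh] at hh2; simp at hh2
        · rw [hh] at hh2; simp at hh2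
      have kill0 : F (n-1) (wp [0]) = F (n-1) (D ^ (m - m'/3) * B * (D ^ (m - m'/3))⁻¹) →
          False := by
        intro h
        rcases hsolve [0] (List.isChain_singleton _) h with ⟨_, h2⟩ | ⟨_, _, h2⟩ | ⟨h2, _, _⟩
        · simp at h2
        · simp at h2
        · simp at h2
      have kill2 : F (n-1) (wp [2]) = F (n-1) (D ^ (m - m'/3) * B * (D ^ (m - m'/3))⁻¹) →
          False := by
        intro h
        rcases hsolve [2] (List.isChain_singleton _) h with ⟨_, h2⟩ | ⟨h2, _, _⟩ | ⟨_, h2, _⟩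
        · simp at h2
        · simp at h2
        · simp at h2
      have killBx : ∀ lx ly lz : List (Fin 3), InvB lx ly lz →
          F (n-1) (wp lx) = F (n-1) (D ^ (m - m'/3) * B * (D ^ (m - m'/3))⁻¹) → False := by
        intro lx ly lz hi h
        rcases hsolve lx hi.redx h with ⟨_, h2⟩ | ⟨h2, _, _⟩ | ⟨h2, _, _⟩
        · rw [h2] at hi
          have := hi.headx; simp at this
        · have := head_of_take3 h2
          rw [hi.headx] at this; simp at this
        · exact hi.tx h2
      have killBz : ∀ lx ly lz : List (Fin 3), InvB lx ly lz →
          F (n-1) (wp lz) = F (n-1) (D ^ (m - m'/3) * B * (D ^ (m - m'/3))⁻¹) → False := by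
        intro lx ly lz hi h
        rcases hsolve lz hi.redz h with ⟨_, h2⟩ | ⟨h2, _, _⟩ | ⟨h2, _, _⟩
        · rw [h2] at hi
          have := hi.headz; simp at this
        · exact hi.tz h2
        · have := head_of_take3 h2
          rw [hi.headz] at this; simp at this
      have killBy : ∀ lx ly lz : List (Fin 3), InvB lx ly lz →
          F (n-1) (wp ly) = F (n-1) (D ^ (m - m'/3) * B * (D ^ (m - m'/3))⁻¹) → False := by
        intro lx ly lz hi h
        rcases hi.hy with pre | pre
        · have hhy : ly.head? = some 0 := by
            rw [← prefix_head? pre hi.ney]; exact hi.headx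
          rcases hsolve ly hi.redy h with ⟨_, h2⟩ | ⟨_, h2, _⟩ | ⟨h2, _, h3⟩
          · rw [h2] at hhy; simp at hhy
          · rw [hhy] at h2; simp at h2
          · exact hi.tx ((prefix_take3 pre (by omega)).trans h2)
        · have hhy : ly.head? = some 2 := by
            rw [← prefix_head? pre hi.ney]; exact hi.headz
          rcases hsolve ly hi.redy h with ⟨_, h2⟩ | ⟨h2, _, h3⟩ | ⟨_, h2, _⟩
          · rw [h2] at hhy; simp at hhy
          · exact hi.tz ((prefix_take3 pre (by omega)).trans h2)
          · rw [hhy] at h2; simp at h2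
      have hsol1 : F (n-1) (wp [1]) = F (n-1) (D ^ (m - m'/3) * B * (D ^ (m - m'/3))⁻¹) →
          m - m'/3 = 0 := by
        intro h
        rcases hsolve [1] (List.isChain_singleton _) h with ⟨h2, _⟩ | ⟨_, _, h2⟩ | ⟨_, _, h2⟩
        · exact h2
        · simp at h2
        · simp at h2
      -- decompose m'
      have hrsplit : m' % 3 = 0 ∨ m' % 3 = 1 ∨ m' % 3 = 2 := by omega
      have hreduce : ∀ X : G, P m' = D ^ (m'/3) * X * (D ^ (m'/3))⁻¹ →
          F (n'-1) X = F (n-1) (D ^ (m - m'/3) * B * (D ^ (m - m'/3))⁻¹) := by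
        intro X hPX
        rw [hPX, hexp] at hq
        have h3 : D ^ (m'/3) * F (n'-1) X * (D ^ (m'/3))⁻¹
            = D ^ m * F (n-1) B * (D ^ m)⁻¹ := hq
        rw [hexp]
        calc F (n'-1) X
            = D ^ (-(m'/3)) * (D ^ (m'/3) * F (n'-1) X * (D ^ (m'/3))⁻¹) * D ^ (m'/3) := by
              group
          _ = D ^ (-(m'/3)) * (D ^ m * F (n-1) B * (D ^ m)⁻¹) * D ^ (m'/3) := by rw [h3]
          _ = D ^ (m - m'/3) * F (n-1) B * (D ^ (m - m'/3))⁻¹ := by group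
      have hregions : n'-1 ≤ n-2 ∨ n'-1 = n-1 ∨ (n ≤ n'-1 ∧ n'-1 ≤ np n - 1) ∨
          np n ≤ n'-1 := by omega
      rcases hrsplit with hr | hr | hr
      · -- X = A : always impossible
        exfalso
        have hX := hreduce A (by
          have := hP0 (m'/3)
          rw [show 3 * (m'/3) = m' from by omega] at this
          exact this)
        rcases hregions with hreg | hreg | ⟨hg1, hg2⟩ | hreg
        · obtain ⟨lx, ly, lz, hA2, _, _, hi⟩ := REG3 (n'-1) hreg
          exact killBx lx ly lz hi (hA2.symm.trans hX)
        · rw [hreg, A_eq] at hX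
          exact kill0 hX
        · obtain ⟨_, lx, ly, hA2, hB2, hi⟩ := REG2 (n'-1) hg1 hg2
          rcases hi.hx with rfl | ⟨hred, hpal, pre, hne, hlen⟩
          · exact kill0 (hA2.symm.trans hX)
          · exact kill1 lx hred (by rw [← prefix_head? pre hne]; exact hi.heady) hlen
              (hA2.symm.trans hX)
        · obtain ⟨lx, ly, lz, hA2, hB2, hC2, hi⟩ := REG1 (n'-1) hreg
          rcases hi.hx with rfl | ⟨hred, hpal, pre, hne, hlen⟩
          · exact kill0 (hA2.symm.trans hX)
          · exact kill1 lx hred (by rw [← prefix_head? pre hne]; exact hi.heady) hlen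
              (hA2.symm.trans hX)
      · -- X = B
        have hX := hreduce B (by
          have := hP1 (m'/3)
          rw [show 3 * (m'/3) + 1 = m' from by omega] at this
          exact this)
        rcases hregions with hreg | hreg | ⟨hg1, hg2⟩ | hreg
        · exfalso
          obtain ⟨lx, ly, lz, _, hB2, _, hi⟩ := REG3 (n'-1) hreg
          exact killBy lx ly lz hi (hB2.symm.trans hX)
        · left
          rw [hreg, B_eq] at hX
          have ht0 := hsol1 hX
          exact ⟨by omega, by omega⟩
        · exfalso
          obtain ⟨_, lx, ly, _, hB2, hi⟩ := REG2 (n'-1) hg1 hg2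
          exact kill1 ly hi.redy hi.heady hi.leny (hB2.symm.trans hX)
        · exfalso
          obtain ⟨lx, ly, lz, _, hB2, _, hi⟩ := REG1 (n'-1) hreg
          exact kill1 ly hi.redy hi.heady hi.leny (hB2.symm.trans hX)
      · -- X = C
        have hX := hreduce C (by
          have := hP2 (m'/3)
          rw [show 3 * (m'/3) + 2 = m' from by omega] at this
          exact this)
        rcases hregions with hreg | hreg | ⟨hg1, hg2⟩ | hreg
        · exfalso
          obtain ⟨lx, ly, lz, _, _, hC2, hi⟩ := REG3 (n'-1) hreg
          exact killBz lx ly lz hi (hC2.symm.trans hX)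
        · exfalso
          rw [hreg, C_eq] at hX
          exact kill2 hX
        · right
          have hCB := (REG2 (n'-1) hg1 hg2).1
          have hX2 := hCB.symm.trans hX
          rw [B_eq] at hX2
          have ht0 := hsol1 hX2
          exact ⟨by omega, by omega, by omega⟩
        · exfalso
          obtain ⟨lx, ly, lz, _, _, hC2, hi⟩ := REG1 (n'-1) hreg
          have hz1 : lz.head? = some 1 := by
            rw [← prefix_head? hi.prez hi.nez]; exact hi.heady
          exact kill1 lz hi.redz hz1 hi.lenz (hC2.symm.trans hX)
    · rintro (⟨hm', hn'⟩ | ⟨hm', hn1, hn2⟩)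
      · subst hm'; subst hn'
        rw [hQ, hPPe, hP1 m, hexp]
      · subst hm'
        rw [hQ, hPPe, hP2 m, hexp, (REG2 (n'-1) (by omega) (by omega)).1]
end
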